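/- Braid relation for the dual-configuration operators: for any tuple of queues q = (q_1,...,q_k) and any i ∈ {1,...,k−2}, one has s_i s_{i+1} s_i q = s_{i+1} s_i s_{i+1} q, where s_i replaces the adjacent pair (q_i, q_{i+1}) by its dual configuration. Consequently, together with s_i² = id and commutation for |i−j| > 1, the maps s_i define an action of the symmetric group S_k on k-tuples of queues. -/

import Mathlib

open scoped BigOperators Classical

namespace MLQ

/-- Words of length `n` over the positive integers (letters are natural numbers,
with `0` unused). Sites are elements of `Fin n`, thought of cyclically. -/
abbrev Word (n : ℕ) := Fin n → ℕ

variable {n : ℕ}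

section Cyclic

variable [NeZero n]

/-- the site `s` steps (cyclically) to the right of `i` -/
def shiftR (i : Fin n) (s : ℕ) : Fin n :=
  ⟨(i.val + s) % n, Nat.mod_lt _ (Nat.pos_of_ne_zero (NeZero.ne n))⟩

/-- the site `s` steps (cyclically) to the left of `i` -/
def shiftL (i : Fin n) (s : ℕ) : Fin n :=
  ⟨(i.val + n - s % n) % n, Nat.mod_lt _ (Nat.pos_of_ne_zero (NeZero.ne n))⟩

/-- number of steps to go (cyclically) right from `i` to `j` -/
def cdistR (i j : Fin n) : ℕ := (j.val + n - i.val) % n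

/-- number of steps to go (cyclically) left from `i` to `j` -/
def cdistL (i j : Fin n) : ℕ := (i.val + n - j.val) % n

/-- first site of `s` weakly to the right (cyclically) of `i` -/
noncomputable def firstRight (i : Fin n) (s : Finset (Fin n)) (h : s.Nonempty) : Fin n :=
  shiftR i ((s.image (cdistR i)).min' (h.image _))

/-- first site of `s` weakly to the left (cyclically) of `i` -/
noncomputable def firstLeft (i : Fin n) (s : Finset (Fin n)) (h : s.Nonempty) : Fin n :=
  shiftL i ((s.image (cdistL i)).min' (h.image _))

/-- One step of Phase II of the queue algorithm: the state consists of the set of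
still-unset sites of the queue together with the partial output word; processing
the letter at site `σ p`, it is placed (unchanged) on the first unset queue site
weakly to the right of `σ p`. -/
noncomputable def step2 (u : Word n) (σ : Equiv.Perm (Fin n))
    (st : Finset (Fin n) × Word n) (p : Fin n) : Finset (Fin n) × Word n :=
  if h : st.1.Nonempty then
    let j := firstRight (σ p) st.1 h
    (st.1.erase j, Function.update st.2 j (u (σ p)))
  else st

/-- One step of Phase I of the queue algorithm: processing the letter at site `σ p`,
the letter `u (σ p) + 1` is placed on the first unset non-queue site weakly to the
left of `σ p`. -/
noncomputable def step1 (u : Word n) (σ : Equiv.Perm (Fin n))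
    (st : Finset (Fin n) × Word n) (p : Fin n) : Finset (Fin n) × Word n :=
  if h : st.1.Nonempty then
    let j := firstLeft (σ p) st.1 h
    (st.1.erase j, Function.update st.2 j (u (σ p) + 1))
  else st

/-- The two-phase queue algorithm computing `q(u)`, using the ordering permutation `σ`
(so the letters are processed in the order `u (σ 0), u (σ 1), …`): Phase II processes
the `|q|` smallest letters in increasing order, Phase I processes the remaining
letters in decreasing order. -/
noncomputable def queueActWith (q : Finset (Fin n)) (σ : Equiv.Perm (Fin n))
    (u : Word n) : Word n :=
  let s2 := ((List.finRange n).take q.card).foldl (step2 u σ) (q, fun _ => 0)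
  let s1 := (((List.finRange n).drop q.card).reverse).foldl (step1 u σ) (qᶜ, s2.2)
  s1.2

/-- `σ` is a valid ordering permutation for the word `u`. -/
def IsSorting (u : Word n) (σ : Equiv.Perm (Fin n)) : Prop := Monotone (u ∘ σ)

/-- The action `q(u)` of a queue `q` on a word `u`, using the canonical sorting
permutation. -/
noncomputable def act (q : Finset (Fin n)) (u : Word n) : Word n :=
  queueActWith q (Tuple.sort u) u

/-- The action of a tuple of queues `(q_1, …, q_k)` on a word (first `q_1`, then `q_2`, …). -/
noncomputable def mlqAct {k : ℕ} (qs : Fin k → Finset (Fin n)) (u : Word n) : Word n :=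
  (List.ofFn qs).foldl (fun w q => act q w) u

end Cyclic

/-- the type of a word: `typeOf u i` is the number of occurrences of the letter `i`. -/
def typeOf (u : Word n) : ℕ → ℕ := fun i => (Finset.univ.filter (fun p => u p = i)).card

/-- partial sums `p_i(m) = m_1 + ⋯ + m_i` of a type -/
def psum (m : ℕ → ℕ) (i : ℕ) : ℕ := ∑ j ∈ Finset.Icc 1 i, m j

/-- number of classes of a type: the largest `i` with `m i ≠ 0` -/
noncomputable def classes (m : ℕ → ℕ) : ℕ := sSup {i | m i ≠ 0}

/-- a packed word: all classes `1, …, ℓ` occur, where `ℓ` is the number of classes -/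
def PackedWord (u : Word n) : Prop :=
  (∀ p, 1 ≤ u p) ∧ ∀ j, 1 ≤ j → j ≤ classes (typeOf u) → typeOf u j ≠ 0

/-- merging classes `i` and `i+1` in a word: all letters `> i` are decremented -/
def mergeWord (i : ℕ) (u : Word n) : Word n := fun p => if i < u p then u p - 1 else u p

/-- merging classes `i` and `i+1` in a type -/
def mergeType (i : ℕ) (m : ℕ → ℕ) : ℕ → ℕ := fun j =>
  if j < i then m j else if j = i then m i + m (i + 1) else m (j + 1)

/-- `∨^(k)`: decrement all but the `k` smallest letters of a word (meaningful when
`k` is a partial sum of the type of the word). -/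
def vee (k : ℕ) (u : Word n) : Word n := fun p =>
  if (Finset.univ.filter (fun q => u q ≤ u p)).card ≤ k then u p else u p - 1

/-- iterated merge `∨_T` (the merges `∨_t` are applied for `t ∈ T` in decreasing order) -/
def mergeWordT (T : Finset ℕ) (u : Word n) : Word n :=
  (T.sort (· ≤ ·)).foldr mergeWord u

/-- iterated merge `∨_T` on types -/
def mergeTypeT (T : Finset ℕ) (m : ℕ → ℕ) : ℕ → ℕ :=
  (T.sort (· ≤ ·)).foldr mergeType m

/-- the weight of a queue, `∏_{j ∈ q} x_j` -/
noncomputable def qwt (q : Finset (Fin n)) : MvPolynomial (Fin n) ℤ :=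
  ∏ j ∈ q, MvPolynomial.X j

/-- the `σ`-twisted spectral weight `⟨u⟩_σ` of a word `u`, with respect to a type `m`
with `k + 1` classes: the sum of the weights of all `σ`-twisted multiline queues
`(q_1, …, q_k)` of type `m` (i.e. `|q_i| = p_{σ(i)}(m)`) with `u = q(1^n)`. -/
noncomputable def swt [NeZero n] (k : ℕ) (m : ℕ → ℕ) (σ : Equiv.Perm (Fin k))
    (u : Word n) : MvPolynomial (Fin n) ℤ :=
  ∑ qs ∈ Finset.univ.filter (fun qs : Fin k → Finset (Fin n) =>
      (∀ i, (qs i).card = psum m ((σ i : ℕ) + 1)) ∧ mlqAct qs (fun _ => 1) = u),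
    ∏ i, qwt (qs i)

/-- the (ordinary) spectral weight `⟨u⟩` of a packed word -/
noncomputable def spec [NeZero n] (u : Word n) : MvPolynomial (Fin n) ℤ :=
  swt (classes (typeOf u) - 1) (typeOf u) (Equiv.refl _) u

/-- the elementary symmetric polynomial `e_k(x_1, …, x_n)` -/
noncomputable def esym (n k : ℕ) : MvPolynomial (Fin n) ℤ :=
  ∑ t ∈ Finset.powersetCard k (Finset.univ : Finset (Fin n)), ∏ j ∈ t, MvPolynomial.X j

/-- the Gale order `A ⪰ B`: same cardinality, and the `k`-th largest element of `A`
is at least the `k`-th largest element of `B`, for every `k` -/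
def Dom (A B : Finset ℕ) : Prop :=
  A.card = B.card ∧ ∀ k < A.card,
    (B.sort (· ≤ ·)).reverse.getD k 0 ≤ (A.sort (· ≤ ·)).reverse.getD k 0

/-- `A ≫ B`: every element of `A` exceeds every element of `B` -/
def Gg (A B : Finset ℕ) : Prop := ∀ a ∈ A, ∀ b ∈ B, b < a

/-- a word is weakly decreasing up to level `t`: any two sites `p < q` with
`u q ≤ t` satisfy `u p ≥ u q` -/
def WDUpTo (t : ℕ) (u : Word n) : Prop :=
  ∀ p q : Fin n, p < q → u q ≤ t → u q ≤ u p

section Dual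

variable [NeZero n]

/-- the cyclic interval `{i, i+1, …, i+t}` -/
def cycInterval (i : Fin n) (t : ℕ) : Finset (Fin n) :=
  (Finset.range (t + 1)).image (shiftR i)

/-- the cyclic interval starting at `i` of length `t` is balanced for the
configuration `(q₁, q₂)` -/
def BalancedInterval (q1 q2 : Finset (Fin n)) (i : Fin n) (t : ℕ) : Prop :=
  (cycInterval i t ∩ q1).card = (cycInterval i t ∩ q2).card ∧
  ∀ l ≤ t, (cycInterval i l ∩ q2).card ≤ (cycInterval i l ∩ q1).card

/-- a site is balanced if it lies in some balanced interval; equivalently, its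
parenthesis (if any) is matched in the cyclic parenthesis-matching of the
configuration -/
def BalancedSite (q1 q2 : Finset (Fin n)) (j : Fin n) : Prop :=
  ∃ i t, t < n ∧ BalancedInterval q1 q2 i t ∧ j ∈ cycInterval i t

/-- the dual configuration: balanced sites keep their memberships, unbalanced
sites swap their memberships between the two queues -/
noncomputable def dualPair (q1 q2 : Finset (Fin n)) : Finset (Fin n) × Finset (Fin n) :=
  (Finset.univ.filter (fun j => if BalancedSite q1 q2 j then j ∈ q1 else j ∈ q2),
   Finset.univ.filter (fun j => if BalancedSite q1 q2 j then j ∈ q2 else j ∈ q1))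

/-- the operator `s_i` on tuples of queues, replacing the (0-indexed) adjacent pair
`(q_i, q_{i+1})` by its dual configuration -/
noncomputable def sOp {k : ℕ} (i : ℕ) (qs : Fin k → Finset (Fin n)) :
    Fin k → Finset (Fin n) := fun j =>
  if h : i + 1 < k then
    (if j.val = i then (dualPair (qs ⟨i, by omega⟩) (qs ⟨i + 1, h⟩)).1
     else if j.val = i + 1 then (dualPair (qs ⟨i, by omega⟩) (qs ⟨i + 1, h⟩)).2
     else qs j)
  else qs j

end Dual


section BraidProof

variable {n : ℕ} [NeZero n]

set_option linter.unusedSectionVars false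

private lemma npos : 0 < n := Nat.pos_of_ne_zero (NeZero.ne n)

/-- the residue of `t` as a site -/
def resi (t : ℕ) : Fin n := ⟨t % n, Nat.mod_lt _ npos⟩

lemma resi_eq_of_modeq {a b : ℕ} (h : a % n = b % n) : (resi a : Fin n) = resi b := by
  simp [resi, h]

lemma resi_add_n (t : ℕ) : (resi (t + n) : Fin n) = resi t :=
  resi_eq_of_modeq (Nat.add_mod_right t n)

/-- the indicator row of a queue, as an `n`-periodic function on `ℕ` -/
def rwq (q : Finset (Fin n)) (t : ℕ) : ℤ := if (resi t : Fin n) ∈ q then 1 else 0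

lemma rwq_nonneg (q : Finset (Fin n)) (t : ℕ) : 0 ≤ rwq q t := by
  unfold rwq; split <;> norm_num

lemma rwq_le_one (q : Finset (Fin n)) (t : ℕ) : rwq q t ≤ 1 := by
  unfold rwq; split <;> norm_num

lemma rwq_congr (q : Finset (Fin n)) {a b : ℕ} (h : a % n = b % n) : rwq q a = rwq q b := by
  unfold rwq; rw [resi_eq_of_modeq h]

lemma rwq_add_n (q : Finset (Fin n)) (t : ℕ) : rwq q (t + n) = rwq q t :=
  rwq_congr q (by simp)

/-- the height function of a pair of queues -/
def hgt (X Y : Finset (Fin n)) (t : ℕ) : ℤ :=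
  ∑ s ∈ Finset.range t, (rwq X s - rwq Y s)

lemma hgt_zero (X Y : Finset (Fin n)) : hgt X Y 0 = 0 := by simp [hgt]

lemma hgt_succ (X Y : Finset (Fin n)) (t : ℕ) :
    hgt X Y (t + 1) = hgt X Y t + (rwq X t - rwq Y t) := by
  simp only [hgt, Finset.sum_range_succ]

lemma sum_rwq_block (q : Finset (Fin n)) (t : ℕ) :
    ∑ s ∈ Finset.range n, rwq q (t + s) = (q.card : ℤ) := by
  induction t with
  | zero =>
    have h1 : ∀ s ∈ Finset.range n, rwq q (0 + s) = if (⟨s % n, Nat.mod_lt _ npos⟩ : Fin n) ∈ q then (1:ℤ) else 0 := by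
      intro s _; rw [Nat.zero_add]; rfl
    rw [Finset.sum_congr rfl h1]
    rw [show (q.card : ℤ) = ∑ j : Fin n, if j ∈ q then (1:ℤ) else 0 by
      rw [Finset.sum_ite_mem, Finset.univ_inter, Finset.sum_const, nsmul_eq_mul, mul_one]]
    rw [← Fin.sum_univ_eq_sum_range (fun s => if (⟨s % n, Nat.mod_lt _ npos⟩ : Fin n) ∈ q then (1:ℤ) else 0)]
    apply Finset.sum_congr rfl
    intro j _
    have hj : (⟨(j:ℕ) % n, Nat.mod_lt _ npos⟩ : Fin n) = j := Fin.ext (Nat.mod_eq_of_lt j.isLt)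
    rw [hj]
  | succ t ih =>
    have h1 : ∑ s ∈ Finset.range (n+1), rwq q (t + s) = rwq q t + ∑ s ∈ Finset.range n, rwq q (t + (s+1)) := by
      rw [Finset.sum_range_succ' (fun s => rwq q (t + s)) n, Nat.add_zero]; ring
    have h2 : ∑ s ∈ Finset.range (n+1), rwq q (t + s) = (∑ s ∈ Finset.range n, rwq q (t + s)) + rwq q (t + n) := by
      rw [Finset.sum_range_succ]
    have h3 : rwq q (t + n) = rwq q t := rwq_add_n q t
    have h5 : ∑ s ∈ Finset.range n, rwq q (t + 1 + s) = ∑ s ∈ Finset.range n, rwq q (t + (s+1)) := by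
      apply Finset.sum_congr rfl; intro s _; congr 1; omega
    rw [h5]; linarith [h1, h2, h3, ih]

lemma hgt_diff (X Y : Finset (Fin n)) (x c : ℕ) :
    hgt X Y (x + c) = hgt X Y x + ∑ s ∈ Finset.range c, (rwq X (x + s) - rwq Y (x + s)) := by
  induction c with
  | zero => simp
  | succ c ih =>
    rw [show x + (c+1) = (x + c) + 1 by omega, hgt_succ, ih, Finset.sum_range_succ]
    ring

lemma hgt_add_n (X Y : Finset (Fin n)) (t : ℕ) :
    hgt X Y (t + n) = hgt X Y t + ((X.card : ℤ) - (Y.card : ℤ)) := by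
  rw [hgt_diff, Finset.sum_sub_distrib, sum_rwq_block, sum_rwq_block]

lemma hgt_congr_diff (X Y : Finset (Fin n)) {x y : ℕ} (h : x % n = y % n) (c : ℕ) :
    hgt X Y (x + c) - hgt X Y x = hgt X Y (y + c) - hgt X Y y := by
  rw [hgt_diff X Y x c, hgt_diff X Y y c]
  have : ∀ s ∈ Finset.range c, rwq X (x + s) - rwq Y (x + s) = rwq X (y + s) - rwq Y (y + s) := by
    intro s _
    have hm : (x + s) % n = (y + s) % n := Nat.ModEq.add_right s h
    rw [rwq_congr X hm, rwq_congr Y hm]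
  rw [Finset.sum_congr rfl this]; ring

/-- quasi-periodicity with drift `d` -/
def PerQ (n : ℕ) (d : ℤ) (F : ℕ → ℤ) : Prop := ∀ t, F (t + n) = F t + d

/-- minimum of `F` over the window `[t, t+n]` -/
def KKf (n : ℕ) (F : ℕ → ℤ) (t : ℕ) : ℤ :=
  (Finset.range (n+1)).inf' (Finset.nonempty_range_iff.mpr (Nat.succ_ne_zero n)) (fun u => F (t + u))

lemma KKf_le (F : ℕ → ℤ) (t : ℕ) {u : ℕ} (hu : u ≤ n) : KKf n F t ≤ F (t + u) :=
  Finset.inf'_le _ (Finset.mem_range.mpr (by omega))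

lemma KKf_le' (F : ℕ → ℤ) {t s : ℕ} (h1 : t ≤ s) (h2 : s ≤ t + n) : KKf n F t ≤ F s := by
  have := KKf_le (n := n) F t (u := s - t) (by omega)
  rwa [show t + (s - t) = s by omega] at this

lemma KKf_spec (F : ℕ → ℤ) (t : ℕ) : ∃ s, t ≤ s ∧ s ≤ t + n ∧ KKf n F t = F s := by
  obtain ⟨u, hu, h⟩ := Finset.exists_mem_eq_inf' (Finset.nonempty_range_iff.mpr (Nat.succ_ne_zero n))
    (fun u => F (t + u))
  exact ⟨t + u, by omega, by have := Finset.mem_range.mp hu; omega, h⟩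

lemma KKf_ge (F : ℕ → ℤ) (t : ℕ) (c : ℤ) (h : ∀ s, t ≤ s → s ≤ t + n → c ≤ F s) :
    c ≤ KKf n F t := by
  obtain ⟨s, h1, h2, h3⟩ := KKf_spec (n := n) F t
  rw [h3]; exact h s h1 h2

lemma KKf_le_far {d : ℤ} {F : ℕ → ℤ} (hF : PerQ n d F) (hd : 0 ≤ d) (hn : 0 < n) :
    ∀ s t, t ≤ s → KKf n F t ≤ F s := by
  intro s
  induction s using Nat.strong_induction_on with
  | _ s ih =>
    intro t hts
    by_cases h : s ≤ t + n
    · exact KKf_le' F hts h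
    · have h1 : t ≤ s - n := by omega
      have h2 := ih (s - n) (by omega) t h1
      have h3 : F (s - n) ≤ F s := by
        have := hF (s - n); rw [show s - n + n = s by omega] at this; linarith
      linarith

lemma KKf_add_const (F : ℕ → ℤ) (c : ℤ) (t : ℕ) :
    KKf n (fun s => F s + c) t = KKf n F t + c := by
  apply le_antisymm
  · obtain ⟨s, h1, h2, h3⟩ := KKf_spec (n := n) F t
    calc KKf n (fun s => F s + c) t ≤ F s + c := KKf_le' _ h1 h2
    _ = KKf n F t + c := by rw [h3]
  · obtain ⟨s, h1, h2, h3⟩ := KKf_spec (n := n) (fun s => F s + c) t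
    have : KKf n F t ≤ F s := KKf_le' _ h1 h2
    rw [h3]; linarith

lemma KKf_congr {F G : ℕ → ℤ} (h : ∀ s, F s = G s) (t : ℕ) : KKf n F t = KKf n G t := by
  unfold KKf; exact Finset.inf'_congr _ rfl (fun u _ => h (t + u))

lemma KKf_per {d : ℤ} {F : ℕ → ℤ} (hF : PerQ n d F) : PerQ n d (KKf n F) := by
  intro t
  have h1 : KKf n F (t + n) = KKf n (fun s => F s + d) t := by
    unfold KKf
    apply Finset.inf'_congr _ rfl
    intro u _
    show F (t + n + u) = F (t + u) + d
    rw [show t + n + u = (t + u) + n by omega, hF]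
  rw [h1, KKf_add_const]

lemma perq_add {n : ℕ} {d₁ d₂ : ℤ} {F G : ℕ → ℤ} (hF : PerQ n d₁ F) (hG : PerQ n d₂ G) :
    PerQ n (d₁ + d₂) (fun t => F t + G t) := by
  intro t; simp only; rw [hF, hG]; ring

lemma perq_comb {n : ℕ} {d₁ d₂ d₃ : ℤ} {F G H : ℕ → ℤ} (hF : PerQ n d₁ F) (hG : PerQ n d₂ G)
    (hH : PerQ n d₃ H) : PerQ n (d₁ - 2 * d₂ + d₃) (fun t => F t - 2 * G t + H t) := by
  intro t; simp only; rw [hF, hG, hH]; ring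

lemma KKf_min_succ {d : ℤ} {F : ℕ → ℤ} (hF : PerQ n d F) (hd : 0 ≤ d) (hn : 0 < n) (t : ℕ) :
    KKf n F t = min (F t) (KKf n F (t+1)) := by
  apply le_antisymm
  · apply le_min
    · have := KKf_le (n := n) F t (u := 0) (by omega); simpa using this
    · obtain ⟨s, h1, h2, h3⟩ := KKf_spec (n := n) F (t+1)
      rw [h3]
      by_cases h : s ≤ t + n
      · exact KKf_le' F (by omega) h
      · have hs : s = t + n + 1 := by omega
        have h4 : F s = F (t + 1) + d := by rw [hs, show t + n + 1 = (t+1) + n by omega, hF]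
        have h5 : KKf n F t ≤ F (t + 1) := KKf_le' F (by omega) (by omega)
        linarith
  · obtain ⟨s, h1, h2, h3⟩ := KKf_spec (n := n) F t
    rw [h3]
    rcases Nat.eq_or_lt_of_le h1 with h | h
    · rw [← h]; exact min_le_left _ _
    · calc min (F t) (KKf n F (t+1)) ≤ KKf n F (t+1) := min_le_right _ _
      _ ≤ F s := KKf_le' F (by omega) (by omega)

lemma KKf_min_succ' {d : ℤ} {F : ℕ → ℤ} (hF : PerQ n d F) (hd : d ≤ 0) (hn : 0 < n) (t : ℕ) :
    KKf n F (t+1) = min (KKf n F t) (F (t + n + 1)) := by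
  apply le_antisymm
  · apply le_min
    · obtain ⟨s, h1, h2, h3⟩ := KKf_spec (n := n) F t
      rw [h3]
      rcases Nat.eq_or_lt_of_le h1 with h | h
      · have h4 : F (t + n) = F t + d := hF t
        have h5 : KKf n F (t+1) ≤ F (t + n) := KKf_le' F (by omega) (by omega)
        rw [← h]; linarith
      · exact KKf_le' F (by omega) (by omega)
    · exact KKf_le' F (by omega) (by omega)
  · obtain ⟨s, h1, h2, h3⟩ := KKf_spec (n := n) F (t+1)
    rw [h3]
    by_cases h : s ≤ t + n
    · calc min (KKf n F t) (F (t+n+1)) ≤ KKf n F t := min_le_left _ _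
      _ ≤ F s := KKf_le' F (by omega) h
    · have hs : s = t + n + 1 := by omega
      rw [hs]; exact min_le_right _ _

lemma KKf_succ_flip {d : ℤ} {F : ℕ → ℤ} (hF : PerQ n d F) (hd : 0 ≤ d) (hn : 0 < n)
    (hstep : ∀ s, F (s+1) ≤ F s + 1) (t : ℕ) :
    KKf n F (t+1) = KKf n F t + (if F t < KKf n F (t+1) then 1 else 0) := by
  have hA := KKf_min_succ hF hd hn t
  split_ifs with h
  · have h1 : KKf n F t = F t := by rw [hA]; exact min_eq_left (by linarith)
    have h2 : KKf n F (t+1) ≤ F (t+1) := by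
      have := KKf_le (n := n) F (t+1) (u := 0) (by omega); simpa using this
    have h3 := hstep t
    omega
  · push_neg at h
    have h1 : KKf n F t = KKf n F (t+1) := by rw [hA]; exact min_eq_right h
    omega

lemma KKf_succ_flip' {d : ℤ} {F : ℕ → ℤ} (hF : PerQ n d F) (hd : d ≤ 0) (hn : 0 < n)
    (hstep : ∀ s, F s - 1 ≤ F (s+1)) (t : ℕ) :
    KKf n F (t+1) = KKf n F t + (if F (t + n + 1) < KKf n F t then -1 else 0) := by
  have hA := KKf_min_succ' hF hd hn t
  split_ifs with h
  · have h1 : KKf n F (t+1) = F (t+n+1) := by rw [hA]; exact min_eq_right (by linarith)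
    have h2 : KKf n F t ≤ F (t + n) := KKf_le' F (by omega) (by omega)
    have h3 := hstep (t + n)
    omega
  · push_neg at h
    have h1 : KKf n F (t+1) = KKf n F t := by rw [hA]; exact min_eq_left h
    omega

lemma flip_iff {d : ℤ} {F : ℕ → ℤ} (hF : PerQ n d F) (hd : 0 ≤ d) (hn : 0 < n) (t : ℕ) :
    F t < KKf n F (t+1) ↔ ∀ u, 1 ≤ u → u ≤ n → F t < F (t + u) := by
  constructor
  · intro h u h1 h2
    have : KKf n F (t+1) ≤ F (t + u) := KKf_le' F (by omega) (by omega)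
    linarith
  · intro h
    obtain ⟨s, h1, h2, h3⟩ := KKf_spec (n := n) F (t+1)
    rw [h3]
    by_cases hc : s ≤ t + n
    · exact h (s - t) (by omega) (by omega) |>.trans_le (le_of_eq (by congr 1; omega))
    · have hs : s = t + n + 1 := by omega
      have h4 : F s = F (t + 1) + d := by rw [hs, show t + n + 1 = (t+1) + n by omega, hF]
      have h5 := h 1 le_rfl hn
      linarith
lemma flip_iff' {d : ℤ} {F : ℕ → ℤ} (hF : PerQ n d F) (hd : d ≤ 0) (hn : 0 < n) (t : ℕ) :
    F (t + n + 1) < KKf n F t ↔ ∀ u, 1 ≤ u → u ≤ n → F (t + n + 1) < F (t + n + 1 - u) := by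
  constructor
  · intro h u h1 h2
    have : KKf n F t ≤ F (t + n + 1 - u) := KKf_le' F (by omega) (by omega)
    linarith
  · intro h
    obtain ⟨s, h1, h2, h3⟩ := KKf_spec (n := n) F t
    rw [h3]
    rcases Nat.eq_or_lt_of_le h1 with hc | hc
    · have h4 : F (t + n) = F t + d := hF t
      have h5 := h 1 le_rfl hn
      have h6 : t + n + 1 - 1 = t + n := by omega
      rw [h6] at h5
      rw [← hc]; linarith
    · have := h (t + n + 1 - s) (by omega) (by omega)
      rwa [show t + n + 1 - (t + n + 1 - s) = s by omega] at this

lemma resi_val (j : Fin n) : (resi (j : ℕ) : Fin n) = j := Fin.ext (Nat.mod_eq_of_lt j.isLt)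

lemma shiftR_resi (x a : ℕ) : shiftR (resi x : Fin n) a = resi (x + a) :=
  Fin.ext (by show (x % n + a) % n = (x + a) % n; rw [Nat.mod_add_mod])

lemma mem_cycInterval {j i : Fin n} {t : ℕ} :
    j ∈ cycInterval i t ↔ ∃ a, a ≤ t ∧ j = shiftR i a := by
  unfold cycInterval
  simp only [Finset.mem_image, Finset.mem_range]
  constructor
  · rintro ⟨a, ha, rfl⟩; exact ⟨a, by omega, rfl⟩
  · rintro ⟨a, ha, rfl⟩; exact ⟨a, by omega, rfl⟩

lemma hgt_step_up (X Y : Finset (Fin n)) (t : ℕ) : hgt X Y (t+1) ≤ hgt X Y t + 1 := by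
  rw [hgt_succ]
  have := rwq_le_one X t; have := rwq_nonneg Y t; linarith

lemma hgt_step_down (X Y : Finset (Fin n)) (t : ℕ) : hgt X Y t - 1 ≤ hgt X Y (t+1) := by
  rw [hgt_succ]
  have := rwq_nonneg X t; have := rwq_le_one Y t; linarith

lemma hgt_perq (X Y : Finset (Fin n)) : PerQ n ((X.card : ℤ) - Y.card) (hgt X Y) :=
  fun t => hgt_add_n X Y t

lemma card_inter_sum (q : Finset (Fin n)) (i : Fin n) {l : ℕ} (hl : l < n) :
    ((cycInterval i l ∩ q).card : ℤ) = ∑ s ∈ Finset.range (l+1), rwq q ((i : ℕ) + s) := by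
  have hinj : ∀ x ∈ Finset.range (l+1), ∀ y ∈ Finset.range (l+1),
      shiftR i x = shiftR i y → x = y := by
    intro x hx y hy hxy
    have hx' := Finset.mem_range.mp hx
    have hy' := Finset.mem_range.mp hy
    have h1 : ((i:ℕ) + x) % n = ((i:ℕ) + y) % n := congrArg Fin.val hxy
    have h2 : x % n = y % n := Nat.ModEq.add_left_cancel' (i:ℕ) h1
    rwa [Nat.mod_eq_of_lt (by omega), Nat.mod_eq_of_lt (by omega)] at h2
  have h1 : (cycInterval i l ∩ q).card
      = ∑ s ∈ Finset.range (l+1), (if shiftR i s ∈ q then 1 else 0) := by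
    rw [← Finset.filter_mem_eq_inter, Finset.card_filter, cycInterval, Finset.sum_image hinj]
  rw [h1]
  push_cast
  apply Finset.sum_congr rfl
  intro s _
  have h2 : shiftR i s = resi ((i:ℕ) + s) := by rw [← resi_val i, shiftR_resi, resi_val]
  rw [h2]; rfl

lemma balInt_iff {X Y : Finset (Fin n)} {t : ℕ} (ht : t < n) (x : ℕ) :
    BalancedInterval X Y (resi x) t ↔
      (hgt X Y (x + (t + 1)) = hgt X Y x ∧
       ∀ l, l ≤ t → hgt X Y x ≤ hgt X Y (x + (l + 1))) := by
  have key : ∀ l, l ≤ t →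
      ((cycInterval (resi x : Fin n) l ∩ X).card : ℤ) - ((cycInterval (resi x : Fin n) l ∩ Y).card : ℤ)
        = hgt X Y (x + (l + 1)) - hgt X Y x := by
    intro l hl
    rw [card_inter_sum X _ (by omega), card_inter_sum Y _ (by omega)]
    have hres : ∀ s, rwq X ((resi x : Fin n).val + s) - rwq Y ((resi x : Fin n).val + s)
        = rwq X (x + s) - rwq Y (x + s) := by
      intro s
      have hm : (x % n + s) % n = (x + s) % n := Nat.mod_add_mod x n s
      show rwq X (x % n + s) - rwq Y (x % n + s) = _
      rw [rwq_congr X hm, rwq_congr Y hm]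
    rw [hgt_diff X Y x (l+1), ← Finset.sum_sub_distrib]
    rw [Finset.sum_congr rfl (fun s _ => hres s), Finset.sum_sub_distrib]
    ring
  unfold BalancedInterval
  constructor
  · rintro ⟨h1, h2⟩
    refine ⟨?_, ?_⟩
    · have := key t le_rfl
      rw [h1] at this
      have h3 : ((cycInterval (resi x : Fin n) t ∩ Y).card : ℤ)
          - ((cycInterval (resi x : Fin n) t ∩ Y).card : ℤ) = 0 := by ring
      linarith [this, h3]
    · intro l hl
      have hk := key l hl
      have h4 := h2 l hl
      have h5 : ((cycInterval (resi x : Fin n) l ∩ Y).card : ℤ)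
          ≤ ((cycInterval (resi x : Fin n) l ∩ X).card : ℤ) := by exact_mod_cast h4
      linarith
  · rintro ⟨h1, h2⟩
    have hk := key t le_rfl
    rw [h1] at hk
    refine ⟨?_, ?_⟩
    · have : ((cycInterval (resi x : Fin n) t ∩ X).card : ℤ)
          = ((cycInterval (resi x : Fin n) t ∩ Y).card : ℤ) := by linarith
      exact_mod_cast this
    · intro l hl
      have hk2 := key l hl
      have h4 := h2 l hl
      have : ((cycInterval (resi x : Fin n) l ∩ Y).card : ℤ)
          ≤ ((cycInterval (resi x : Fin n) l ∩ X).card : ℤ) := by linarith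
      exact_mod_cast this

lemma self_mem_cycInterval (j : Fin n) (t : ℕ) : j ∈ cycInterval j t := by
  rw [mem_cycInterval]
  exact ⟨0, Nat.zero_le _, by rw [← resi_val j, shiftR_resi, Nat.add_zero]⟩

lemma balA {X Y : Finset (Fin n)} {j : Fin n} (h : rwq X (j:ℕ) = rwq Y (j:ℕ)) :
    BalancedSite X Y j := by
  refine ⟨j, 0, npos, ?_, self_mem_cycInterval j 0⟩
  rw [← resi_val j, balInt_iff npos]
  constructor
  · rw [show (j:ℕ) + (0+1) = (j:ℕ) + 1 by omega, hgt_succ, h]; ring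
  · intro l hl
    rw [Nat.le_zero] at hl
    rw [hl, show (j:ℕ) + (0+1) = (j:ℕ) + 1 by omega, hgt_succ, h]
    linarith

lemma balB_of {X Y : Finset (Fin n)} {j : Fin n} (hm : rwq X (j:ℕ) - rwq Y (j:ℕ) = 1)
    (hex : ∃ u, 1 ≤ u ∧ u ≤ n ∧ hgt X Y ((j:ℕ) + u) ≤ hgt X Y (j:ℕ)) :
    BalancedSite X Y j := by
  classical
  set F := hgt X Y with hFdef
  obtain ⟨u₀, hmin, hu1, hun, hle⟩ : ∃ u₀, (∀ m, m < u₀ → ¬(1 ≤ m ∧ m ≤ n ∧ F ((j:ℕ)+m) ≤ F (j:ℕ)))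
      ∧ 1 ≤ u₀ ∧ u₀ ≤ n ∧ F ((j:ℕ)+u₀) ≤ F (j:ℕ) := by
    obtain ⟨h1, h2, h3⟩ := Nat.find_spec hex
    exact ⟨Nat.find hex, fun m hm => Nat.find_min hex hm, h1, h2, h3⟩
  have hstep1 : F ((j:ℕ) + 1) = F (j:ℕ) + 1 := by
    rw [hFdef, hgt_succ]; linarith
  have hu2 : 2 ≤ u₀ := by
    rcases Nat.lt_or_ge u₀ 2 with h | h
    · have h1 : u₀ = 1 := by omega
      rw [h1, hstep1] at hle
      linarith
    · exact h
  have heq : F ((j:ℕ) + u₀) = F (j:ℕ) := by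
    have h1 := hmin (u₀ - 1) (by omega)
    push_neg at h1
    have h2 : F ((j:ℕ) + (u₀ - 1)) > F (j:ℕ) := by
      have := h1 (by omega) (by omega); linarith
    have h3 : F ((j:ℕ) + (u₀-1)) - 1 ≤ F ((j:ℕ) + u₀) := by
      have := hgt_step_down X Y ((j:ℕ) + (u₀ - 1))
      rwa [show (j:ℕ) + (u₀-1) + 1 = (j:ℕ) + u₀ by omega] at this
    omega
  refine ⟨j, u₀ - 1, by omega, ?_, self_mem_cycInterval j (u₀-1)⟩
  rw [← resi_val j, balInt_iff (by omega)]
  constructor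
  · rw [show (j:ℕ) + (u₀ - 1 + 1) = (j:ℕ) + u₀ by omega]; exact heq
  · intro l hl
    rcases Nat.eq_or_lt_of_le (show l + 1 ≤ u₀ by omega) with h | h
    · rw [show (j:ℕ) + (l+1) = (j:ℕ) + u₀ by omega]
      exact le_of_eq heq.symm
    · have h1 := hmin (l+1) h
      push_neg at h1
      have := h1 (by omega) (by omega)
      linarith

lemma balB_to {X Y : Finset (Fin n)} {j : Fin n} (hB : BalancedSite X Y j) :
    ∃ u, 1 ≤ u ∧ u ≤ n ∧ hgt X Y ((j:ℕ) + u) ≤ hgt X Y (j:ℕ) := by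
  obtain ⟨i, t, htn, hBI, hmem⟩ := hB
  obtain ⟨a, ha, hja⟩ := mem_cycInterval.mp hmem
  rw [← resi_val i, balInt_iff htn] at hBI
  obtain ⟨h1, h2⟩ := hBI
  set F := hgt X Y with hFdef
  have h5 : shiftR i a = resi ((i:ℕ) + a) := by rw [← shiftR_resi, resi_val]
  have hxj : ((i:ℕ) + a) % n = (j:ℕ) % n := by
    rw [hja, h5]
    exact (Nat.mod_mod_of_dvd _ dvd_rfl).symm
  have hFia : F (i:ℕ) ≤ F ((i:ℕ) + a) := by
    rcases Nat.eq_zero_or_pos a with h | h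
    · rw [h]; simp
    · have := h2 (a - 1) (by omega)
      rwa [show (i:ℕ) + (a - 1 + 1) = (i:ℕ) + a by omega] at this
  refine ⟨t + 1 - a, by omega, by omega, ?_⟩
  have key : F ((i:ℕ) + a + (t + 1 - a)) ≤ F ((i:ℕ) + a) := by
    rw [show (i:ℕ) + a + (t + 1 - a) = (i:ℕ) + (t+1) by omega, h1]
    exact hFia
  have htr := hgt_congr_diff X Y (x := (i:ℕ) + a) (y := (j:ℕ)) hxj (t + 1 - a)
  rw [← hFdef] at htr
  linarith

lemma balC_of {X Y : Finset (Fin n)} {j : Fin n} (hm : rwq X (j:ℕ) - rwq Y (j:ℕ) = -1)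
    (hex : ∃ u, 1 ≤ u ∧ u ≤ n ∧ hgt X Y ((j:ℕ) + n + 1 - u) ≤ hgt X Y ((j:ℕ) + n + 1)) :
    BalancedSite X Y j := by
  classical
  obtain ⟨u₀, hmin, hu1, hun, hle⟩ : ∃ u₀,
      (∀ m, m < u₀ → ¬(1 ≤ m ∧ m ≤ n ∧ hgt X Y ((j:ℕ)+n+1-m) ≤ hgt X Y ((j:ℕ)+n+1)))
      ∧ 1 ≤ u₀ ∧ u₀ ≤ n ∧ hgt X Y ((j:ℕ)+n+1-u₀) ≤ hgt X Y ((j:ℕ)+n+1) := by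
    obtain ⟨h1, h2, h3⟩ := Nat.find_spec hex
    exact ⟨Nat.find hex, fun m hm => Nat.find_min hex hm, h1, h2, h3⟩
  have hmjn : rwq X ((j:ℕ) + n) - rwq Y ((j:ℕ) + n) = -1 := by
    rw [rwq_congr X (a := (j:ℕ)+n) (b := (j:ℕ)) (by simp), rwq_congr Y (a := (j:ℕ)+n) (b := (j:ℕ)) (by simp)]
    exact hm
  have hstep1 : hgt X Y ((j:ℕ) + n + 1) = hgt X Y ((j:ℕ) + n) - 1 := by
    rw [hgt_succ]; linarith
  have hu2 : 2 ≤ u₀ := by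
    rcases Nat.lt_or_ge u₀ 2 with h | h
    · have h1 : u₀ = 1 := by omega
      rw [h1, show (j:ℕ) + n + 1 - 1 = (j:ℕ) + n by omega] at hle
      linarith
    · exact h
  have heq : hgt X Y ((j:ℕ) + n + 1 - u₀) = hgt X Y ((j:ℕ) + n + 1) := by
    have h1 := hmin (u₀ - 1) (by omega)
    push_neg at h1
    have h2 : hgt X Y ((j:ℕ) + n + 1 - (u₀ - 1)) > hgt X Y ((j:ℕ) + n + 1) := by
      have := h1 (by omega) (by omega); linarith
    have h6 := hgt_step_up X Y ((j:ℕ) + n + 1 - u₀)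
    rw [show (j:ℕ) + n + 1 - u₀ + 1 = (j:ℕ) + n + 1 - (u₀ - 1) by omega] at h6
    omega
  refine ⟨resi ((j:ℕ) + n + 1 - u₀), u₀ - 1, by omega, ?_, ?_⟩
  · rw [balInt_iff (by omega)]
    constructor
    · rw [show (j:ℕ) + n + 1 - u₀ + (u₀ - 1 + 1) = (j:ℕ) + n + 1 by omega]
      exact heq.symm
    · intro l hl
      have hv : (j:ℕ) + n + 1 - u₀ + (l + 1) = (j:ℕ) + n + 1 - (u₀ - l - 1) := by omega
      rcases Nat.eq_zero_or_pos (u₀ - l - 1) with h | h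
      · rw [hv, h, Nat.sub_zero]
        exact le_of_eq heq
      · have h1 := hmin (u₀ - l - 1) (by omega)
        push_neg at h1
        have h7 := h1 (by omega) (by omega)
        rw [hv]
        linarith
  · rw [mem_cycInterval]
    refine ⟨u₀ - 1, le_rfl, ?_⟩
    rw [shiftR_resi, show (j:ℕ) + n + 1 - u₀ + (u₀ - 1) = (j:ℕ) + n by omega, resi_add_n, resi_val]

lemma balC_to {X Y : Finset (Fin n)} {j : Fin n} (hB : BalancedSite X Y j) :
    ∃ u, 1 ≤ u ∧ u ≤ n ∧ hgt X Y ((j:ℕ) + n + 1 - u) ≤ hgt X Y ((j:ℕ) + n + 1) := by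
  obtain ⟨i, t, htn, hBI, hmem⟩ := hB
  obtain ⟨a, ha, hja⟩ := mem_cycInterval.mp hmem
  rw [← resi_val i, balInt_iff htn] at hBI
  obtain ⟨h1, h2⟩ := hBI
  set F := hgt X Y with hFdef
  have h5 : shiftR i a = resi ((i:ℕ) + a) := by rw [← shiftR_resi, resi_val]
  have hxj : ((i:ℕ) + a) % n = (j:ℕ) % n := by
    rw [hja, h5]
    exact (Nat.mod_mod_of_dvd _ dvd_rfl).symm
  refine ⟨a + 1, by omega, by omega, ?_⟩
  have key : F (i:ℕ) ≤ F ((i:ℕ) + (a + 1)) := h2 a (by omega)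
  have hbase : ((j:ℕ) + n - a) % n = (i:ℕ) % n := by
    have h3 : ((j:ℕ) + n - a) + a = (j:ℕ) + n := by omega
    have h4 : (((j:ℕ) + n - a) + a) % n = ((i:ℕ) + a) % n := by
      rw [h3, Nat.add_mod_right, ← hxj]
    exact Nat.ModEq.add_right_cancel' a h4
  have htr := hgt_congr_diff X Y (x := (j:ℕ) + n - a) (y := (i:ℕ)) hbase (a + 1)
  rw [← hFdef] at htr
  rw [show (j:ℕ) + n + 1 - (a+1) = (j:ℕ) + n - a by omega,
      show (j:ℕ) + n + 1 = ((j:ℕ) + n - a) + (a + 1) by omega]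
  linarith

lemma rwq_cases (q : Finset (Fin n)) (t : ℕ) : rwq q t = 0 ∨ rwq q t = 1 := by
  unfold rwq; split <;> simp

lemma unbal_iff {X Y : Finset (Fin n)} (hd : (Y.card : ℤ) ≤ X.card) (j : Fin n) :
    ¬ BalancedSite X Y j ↔
      (rwq X (j:ℕ) - rwq Y (j:ℕ) = 1 ∧
        ∀ u, 1 ≤ u → u ≤ n → hgt X Y (j:ℕ) < hgt X Y ((j:ℕ) + u)) := by
  have hbal_of_eq : rwq X (j:ℕ) = rwq Y (j:ℕ) → BalancedSite X Y j := fun h => balA h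
  have hbal_of_neg : rwq X (j:ℕ) - rwq Y (j:ℕ) = -1 → BalancedSite X Y j := by
    intro h
    refine balC_of h ⟨n, npos, le_rfl, ?_⟩
    have h2 := hgt_add_n X Y ((j:ℕ)+1)
    rw [show (j:ℕ)+1+n = (j:ℕ)+n+1 by omega] at h2
    rw [show (j:ℕ)+n+1-n = (j:ℕ)+1 by omega]
    linarith
  rcases rwq_cases X (j:ℕ) with hX | hX <;> rcases rwq_cases Y (j:ℕ) with hY | hY
  · constructor
    · intro h; exact absurd (hbal_of_eq (by rw [hX, hY])) h
    · rintro ⟨h1, -⟩; rw [hX, hY] at h1; norm_num at h1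
  · constructor
    · intro h; exact absurd (hbal_of_neg (by rw [hX, hY]; norm_num)) h
    · rintro ⟨h1, -⟩; rw [hX, hY] at h1; norm_num at h1
  · constructor
    · intro h
      refine ⟨by rw [hX, hY]; norm_num, ?_⟩
      intro u h1 h2
      by_contra hc
      push_neg at hc
      exact h (balB_of (by rw [hX, hY]; norm_num) ⟨u, h1, h2, hc⟩)
    · rintro ⟨-, h2⟩ hB
      obtain ⟨u, hu1, hu2, hu3⟩ := balB_to hB
      exact absurd hu3 (not_le.mpr (h2 u hu1 hu2))
  · constructor
    · intro h; exact absurd (hbal_of_eq (by rw [hX, hY])) h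
    · rintro ⟨h1, -⟩; rw [hX, hY] at h1; norm_num at h1

lemma unbal_iff' {X Y : Finset (Fin n)} (hd : (X.card : ℤ) ≤ Y.card) (j : Fin n) :
    ¬ BalancedSite X Y j ↔
      (rwq X (j:ℕ) - rwq Y (j:ℕ) = -1 ∧
        ∀ u, 1 ≤ u → u ≤ n → hgt X Y ((j:ℕ) + n + 1) < hgt X Y ((j:ℕ) + n + 1 - u)) := by
  have hbal_of_eq : rwq X (j:ℕ) = rwq Y (j:ℕ) → BalancedSite X Y j := fun h => balA h
  have hbal_of_pos : rwq X (j:ℕ) - rwq Y (j:ℕ) = 1 → BalancedSite X Y j := by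
    intro h
    refine balB_of h ⟨n, npos, le_rfl, ?_⟩
    have h2 := hgt_add_n X Y (j:ℕ)
    linarith
  rcases rwq_cases X (j:ℕ) with hX | hX <;> rcases rwq_cases Y (j:ℕ) with hY | hY
  · constructor
    · intro h; exact absurd (hbal_of_eq (by rw [hX, hY])) h
    · rintro ⟨h1, -⟩; rw [hX, hY] at h1; norm_num at h1
  · constructor
    · intro h
      refine ⟨by rw [hX, hY]; norm_num, ?_⟩
      intro u h1 h2
      by_contra hc
      push_neg at hc
      exact h (balC_of (by rw [hX, hY]; norm_num) ⟨u, h1, h2, hc⟩)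
    · rintro ⟨-, h2⟩ hB
      obtain ⟨u, hu1, hu2, hu3⟩ := balC_to hB
      exact absurd hu3 (not_le.mpr (h2 u hu1 hu2))
  · constructor
    · intro h; exact absurd (hbal_of_pos (by rw [hX, hY]; norm_num)) h
    · rintro ⟨h1, -⟩; rw [hX, hY] at h1; norm_num at h1
  · constructor
    · intro h; exact absurd (hbal_of_eq (by rw [hX, hY])) h
    · rintro ⟨h1, -⟩; rw [hX, hY] at h1; norm_num at h1

lemma mem_dualPair1 {X Y : Finset (Fin n)} (z : Fin n) :
    z ∈ (dualPair X Y).1 ↔ (if BalancedSite X Y z then z ∈ X else z ∈ Y) := by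
  simp [dualPair]

lemma mem_dualPair2 {X Y : Finset (Fin n)} (z : Fin n) :
    z ∈ (dualPair X Y).2 ↔ (if BalancedSite X Y z then z ∈ Y else z ∈ X) := by
  simp [dualPair]

lemma rwq_mem_iff {q : Finset (Fin n)} {j : Fin n} : rwq q (j:ℕ) = if j ∈ q then 1 else 0 := by
  unfold rwq; rw [resi_val]

lemma dual_rw {X Y : Finset (Fin n)} (hd : (Y.card : ℤ) ≤ X.card) (t : ℕ) :
    rwq (dualPair X Y).1 t = rwq X t - (KKf n (hgt X Y) (t+1) - KKf n (hgt X Y) t) ∧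
    rwq (dualPair X Y).2 t = rwq Y t + (KKf n (hgt X Y) (t+1) - KKf n (hgt X Y) t) := by
  have hF : PerQ n ((X.card:ℤ) - Y.card) (hgt X Y) := hgt_perq X Y
  have hd0 : (0:ℤ) ≤ (X.card:ℤ) - Y.card := by linarith
  have hstep : ∀ s, hgt X Y (s+1) ≤ hgt X Y s + 1 := hgt_step_up X Y
  have hflip := KKf_succ_flip hF hd0 npos hstep t
  have hjt : ((resi t : Fin n):ℕ) % n = t % n := Nat.mod_mod_of_dvd _ dvd_rfl
  have htr : ∀ c, hgt X Y (((resi t : Fin n):ℕ) + c) - hgt X Y ((resi t : Fin n):ℕ)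
      = hgt X Y (t + c) - hgt X Y t := fun c => hgt_congr_diff X Y hjt c
  have hrwX : rwq X ((resi t : Fin n):ℕ) = rwq X t := rwq_congr X hjt
  have hrwY : rwq Y ((resi t : Fin n):ℕ) = rwq Y t := rwq_congr Y hjt
  have hrwd1 : rwq (dualPair X Y).1 t
      = if (if BalancedSite X Y (resi t) then (resi t : Fin n) ∈ X else (resi t : Fin n) ∈ Y)
        then (1:ℤ) else 0 := by
    unfold rwq
    exact if_congr (mem_dualPair1 _) rfl rfl
  have hrwd2 : rwq (dualPair X Y).2 t
      = if (if BalancedSite X Y (resi t) then (resi t : Fin n) ∈ Y else (resi t : Fin n) ∈ X)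
        then (1:ℤ) else 0 := by
    unfold rwq
    exact if_congr (mem_dualPair2 _) rfl rfl
  by_cases hc : hgt X Y t < KKf n (hgt X Y) (t+1)
  · rw [if_pos hc] at hflip
    have hK1 : KKf n (hgt X Y) (t+1) ≤ hgt X Y (t+1) := by
      have := KKf_le (n := n) (hgt X Y) (t+1) (u := 0) (by omega); simpa using this
    have hsucc := hgt_succ X Y t
    have hmX := rwq_cases X t
    have hmY := rwq_cases Y t
    have hmt : rwq X t = 1 ∧ rwq Y t = 0 := by
      rcases hmX with h | h <;> rcases hmY with h' | h' <;> constructor <;> omega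
    have hunb : ¬ BalancedSite X Y (resi t) := by
      rw [unbal_iff hd]
      refine ⟨by rw [hrwX, hrwY]; omega, ?_⟩
      intro u h1 h2
      have := (flip_iff hF hd0 npos t).mp hc u h1 h2
      have := htr u
      linarith
    have hYmem : (resi t : Fin n) ∉ Y := by
      intro hmem
      have : rwq Y ((resi t : Fin n):ℕ) = 1 := by rw [rwq_mem_iff, if_pos hmem]
      rw [hrwY] at this; omega
    have hXmem : (resi t : Fin n) ∈ X := by
      by_contra hmem
      have : rwq X ((resi t : Fin n):ℕ) = 0 := by rw [rwq_mem_iff, if_neg hmem]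
      rw [hrwX] at this; omega
    constructor
    · rw [hrwd1, if_neg (by rw [if_neg hunb]; exact hYmem)]; omega
    · rw [hrwd2, if_pos (by rw [if_neg hunb]; exact hXmem)]; omega
  · rw [if_neg hc] at hflip
    have hbal : BalancedSite X Y (resi t) := by
      by_contra hnb
      obtain ⟨hm1, hstrict⟩ := (unbal_iff hd _).mp hnb
      apply hc
      rw [flip_iff hF hd0 npos t]
      intro u h1 h2
      have := hstrict u h1 h2
      have := htr u
      linarith
    constructor
    · rw [hrwd1]
      by_cases hmem : (resi t : Fin n) ∈ X
      · rw [if_pos (by rw [if_pos hbal]; exact hmem)]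
        have : rwq X ((resi t : Fin n):ℕ) = 1 := by rw [rwq_mem_iff, if_pos hmem]
        rw [hrwX] at this; omega
      · rw [if_neg (by rw [if_pos hbal]; exact hmem)]
        have : rwq X ((resi t : Fin n):ℕ) = 0 := by rw [rwq_mem_iff, if_neg hmem]
        rw [hrwX] at this; omega
    · rw [hrwd2]
      by_cases hmem : (resi t : Fin n) ∈ Y
      · rw [if_pos (by rw [if_pos hbal]; exact hmem)]
        have : rwq Y ((resi t : Fin n):ℕ) = 1 := by rw [rwq_mem_iff, if_pos hmem]
        rw [hrwY] at this; omega
      · rw [if_neg (by rw [if_pos hbal]; exact hmem)]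
        have : rwq Y ((resi t : Fin n):ℕ) = 0 := by rw [rwq_mem_iff, if_neg hmem]
        rw [hrwY] at this; omega

lemma dual_rw' {X Y : Finset (Fin n)} (hd : (X.card : ℤ) ≤ Y.card) (t : ℕ) :
    rwq (dualPair X Y).1 t = rwq X t - (KKf n (hgt X Y) (t+1) - KKf n (hgt X Y) t) ∧
    rwq (dualPair X Y).2 t = rwq Y t + (KKf n (hgt X Y) (t+1) - KKf n (hgt X Y) t) := by
  have hF : PerQ n ((X.card:ℤ) - Y.card) (hgt X Y) := hgt_perq X Y
  have hd0 : (X.card:ℤ) - Y.card ≤ 0 := by linarith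
  have hstep : ∀ s, hgt X Y s - 1 ≤ hgt X Y (s+1) := hgt_step_down X Y
  have hflip := KKf_succ_flip' hF hd0 npos hstep t
  have hjt : ((resi t : Fin n):ℕ) % n = t % n := Nat.mod_mod_of_dvd _ dvd_rfl
  have htr : ∀ c, hgt X Y (((resi t : Fin n):ℕ) + c) - hgt X Y ((resi t : Fin n):ℕ)
      = hgt X Y (t + c) - hgt X Y t := fun c => hgt_congr_diff X Y hjt c
  have hrwX : rwq X ((resi t : Fin n):ℕ) = rwq X t := rwq_congr X hjt
  have hrwY : rwq Y ((resi t : Fin n):ℕ) = rwq Y t := rwq_congr Y hjt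
  have hrwXn : rwq X (t + n) = rwq X t := rwq_add_n X t
  have hrwYn : rwq Y (t + n) = rwq Y t := rwq_add_n Y t
  have hrwd1 : rwq (dualPair X Y).1 t
      = if (if BalancedSite X Y (resi t) then (resi t : Fin n) ∈ X else (resi t : Fin n) ∈ Y)
        then (1:ℤ) else 0 := by
    unfold rwq
    exact if_congr (mem_dualPair1 _) rfl rfl
  have hrwd2 : rwq (dualPair X Y).2 t
      = if (if BalancedSite X Y (resi t) then (resi t : Fin n) ∈ Y else (resi t : Fin n) ∈ X)
        then (1:ℤ) else 0 := by
    unfold rwq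
    exact if_congr (mem_dualPair2 _) rfl rfl
  have htrn : ∀ u, u ≤ n + 1 → hgt X Y (((resi t : Fin n):ℕ) + n + 1 - u) - hgt X Y ((resi t : Fin n):ℕ)
      = hgt X Y (t + n + 1 - u) - hgt X Y t := by
    intro u hu
    have h1 := htr (n + 1 - u)
    rw [show ((resi t : Fin n):ℕ) + (n + 1 - u) = ((resi t : Fin n):ℕ) + n + 1 - u by omega,
        show t + (n + 1 - u) = t + n + 1 - u by omega] at h1
    exact h1
  by_cases hc : hgt X Y (t + n + 1) < KKf n (hgt X Y) t
  · rw [if_pos hc] at hflip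
    have hK1 : KKf n (hgt X Y) t ≤ hgt X Y (t + n) := KKf_le' _ (by omega) (by omega)
    have hsucc := hgt_succ X Y (t + n)
    rw [show t + n + 1 = (t + n) + 1 by omega] at hc
    have hmX := rwq_cases X t
    have hmY := rwq_cases Y t
    have hmt : rwq X t = 0 ∧ rwq Y t = 1 := by
      rw [hrwXn, hrwYn] at hsucc
      rcases hmX with h | h <;> rcases hmY with h' | h' <;> constructor <;> omega
    have hunb : ¬ BalancedSite X Y (resi t) := by
      rw [unbal_iff' hd]
      refine ⟨by rw [hrwX, hrwY]; omega, ?_⟩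
      intro u h1 h2
      have h3 := (flip_iff' hF hd0 npos t).mp (by rw [show t+n+1 = (t+n)+1 by omega]; exact hc) u h1 h2
      have h4 := htrn u (by omega)
      have h5 := htrn 0 (by omega)
      rw [show ((resi t : Fin n):ℕ) + n + 1 - 0 = ((resi t : Fin n):ℕ) + n + 1 by omega,
          show t + n + 1 - 0 = t + n + 1 by omega] at h5
      linarith
    have hXmem : (resi t : Fin n) ∉ X := by
      intro hmem
      have : rwq X ((resi t : Fin n):ℕ) = 1 := by rw [rwq_mem_iff, if_pos hmem]
      rw [hrwX] at this; omega
    have hYmem : (resi t : Fin n) ∈ Y := by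
      by_contra hmem
      have : rwq Y ((resi t : Fin n):ℕ) = 0 := by rw [rwq_mem_iff, if_neg hmem]
      rw [hrwY] at this; omega
    constructor
    · rw [hrwd1, if_pos (by rw [if_neg hunb]; exact hYmem)]; omega
    · rw [hrwd2, if_neg (by rw [if_neg hunb]; exact hXmem)]; omega
  · rw [if_neg hc] at hflip
    have hbal : BalancedSite X Y (resi t) := by
      by_contra hnb
      obtain ⟨hm1, hstrict⟩ := (unbal_iff' hd _).mp hnb
      apply hc
      rw [flip_iff' hF hd0 npos t]
      intro u h1 h2
      have h3 := hstrict u h1 h2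
      have h4 := htrn u (by omega)
      have h5 := htrn 0 (by omega)
      rw [show ((resi t : Fin n):ℕ) + n + 1 - 0 = ((resi t : Fin n):ℕ) + n + 1 by omega,
          show t + n + 1 - 0 = t + n + 1 by omega] at h5
      linarith
    constructor
    · rw [hrwd1]
      by_cases hmem : (resi t : Fin n) ∈ X
      · rw [if_pos (by rw [if_pos hbal]; exact hmem)]
        have : rwq X ((resi t : Fin n):ℕ) = 1 := by rw [rwq_mem_iff, if_pos hmem]
        rw [hrwX] at this; omega
      · rw [if_neg (by rw [if_pos hbal]; exact hmem)]
        have : rwq X ((resi t : Fin n):ℕ) = 0 := by rw [rwq_mem_iff, if_neg hmem]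
        rw [hrwX] at this; omega
    · rw [hrwd2]
      by_cases hmem : (resi t : Fin n) ∈ Y
      · rw [if_pos (by rw [if_pos hbal]; exact hmem)]
        have : rwq Y ((resi t : Fin n):ℕ) = 1 := by rw [rwq_mem_iff, if_pos hmem]
        rw [hrwY] at this; omega
      · rw [if_neg (by rw [if_pos hbal]; exact hmem)]
        have : rwq Y ((resi t : Fin n):ℕ) = 0 := by rw [rwq_mem_iff, if_neg hmem]
        rw [hrwY] at this; omega

lemma rwq_ext {A B : Finset (Fin n)} (h : ∀ t, rwq A t = rwq B t) : A = B := by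
  ext j
  have h1 := h (j:ℕ)
  rw [rwq_mem_iff, rwq_mem_iff] at h1
  by_cases hA : j ∈ A <;> by_cases hB : j ∈ B <;> simp [hA, hB] at h1 ⊢

lemma hgt_eq_of_incr {A B : Finset (Fin n)} (φ : ℕ → ℤ) (h0 : φ 0 = 0)
    (h : ∀ s, rwq A s - rwq B s = φ (s+1) - φ s) : ∀ t, hgt A B t = φ t := by
  intro t
  induction t with
  | zero => rw [hgt_zero, h0]
  | succ t ih => rw [hgt_succ, ih, h t]; ring

lemma perq_unique {d₁ d₂ : ℤ} {F : ℕ → ℤ} (h₁ : PerQ n d₁ F) (h₂ : PerQ n d₂ F) : d₁ = d₂ := by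
  have e₁ := h₁ 0; have e₂ := h₂ 0; linarith

lemma card_eq_sum (q : Finset (Fin n)) : (q.card : ℤ) = ∑ s ∈ Finset.range n, rwq q s := by
  rw [← sum_rwq_block q 0]
  apply Finset.sum_congr rfl
  intro s _; rw [Nat.zero_add]

lemma dual_rw_any (X Y : Finset (Fin n)) (t : ℕ) :
    rwq (dualPair X Y).1 t = rwq X t - (KKf n (hgt X Y) (t+1) - KKf n (hgt X Y) t) ∧
    rwq (dualPair X Y).2 t = rwq Y t + (KKf n (hgt X Y) (t+1) - KKf n (hgt X Y) t) := by
  rcases le_total ((Y.card : ℤ)) ((X.card : ℤ)) with h | h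
  · exact dual_rw h t
  · exact dual_rw' h t

lemma dual_hgt (X Y : Finset (Fin n)) (t : ℕ) :
    hgt (dualPair X Y).1 (dualPair X Y).2 t
      = hgt X Y t - 2 * (KKf n (hgt X Y) t - KKf n (hgt X Y) 0) := by
  apply hgt_eq_of_incr (fun t => hgt X Y t - 2 * (KKf n (hgt X Y) t - KKf n (hgt X Y) 0))
    (by simp [hgt_zero])
  intro s
  obtain ⟨h1, h2⟩ := dual_rw_any X Y s
  have h3 := hgt_succ X Y s
  show rwq (dualPair X Y).1 s - rwq (dualPair X Y).2 s
      = (hgt X Y (s+1) - 2 * (KKf n (hgt X Y) (s+1) - KKf n (hgt X Y) 0))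
        - (hgt X Y s - 2 * (KKf n (hgt X Y) s - KKf n (hgt X Y) 0))
  rw [h1, h2, h3]
  ring

lemma dual_card (X Y : Finset (Fin n)) :
    (dualPair X Y).1.card = Y.card ∧ (dualPair X Y).2.card = X.card := by
  have hper1 : PerQ n ((((dualPair X Y).1.card):ℤ) - ((dualPair X Y).2.card))
      (hgt (dualPair X Y).1 (dualPair X Y).2) := hgt_perq _ _
  have hper2 : PerQ n (-((X.card : ℤ) - Y.card)) (hgt (dualPair X Y).1 (dualPair X Y).2) := by
    intro t
    rw [dual_hgt X Y, dual_hgt X Y]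
    have hK := KKf_per (hgt_perq X Y) t
    have hF := hgt_perq X Y t
    rw [hK, hF]
    ring
  have hcards := perq_unique hper1 hper2
  have hsum : (((dualPair X Y).1.card):ℤ) + ((dualPair X Y).2.card) = (X.card:ℤ) + Y.card := by
    rw [card_eq_sum, card_eq_sum, card_eq_sum, card_eq_sum]
    rw [← Finset.sum_add_distrib, ← Finset.sum_add_distrib]
    apply Finset.sum_congr rfl
    intro s _
    obtain ⟨h1, h2⟩ := dual_rw_any X Y s
    rw [h1, h2]; ring
  constructor
  · have : (((dualPair X Y).1.card):ℤ) = (Y.card:ℤ) := by linarith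
    exact_mod_cast this
  · have : (((dualPair X Y).2.card):ℤ) = (X.card:ℤ) := by linarith
    exact_mod_cast this

lemma propII {F G : ℕ → ℤ} {dF dG : ℤ} (hF : PerQ n dF F) (hG : PerQ n dG G)
    (hdF : 0 ≤ dF) (hdG : 0 ≤ dG) (hstep : ∀ s, F (s+1) ≤ F s + 1) (t : ℕ) :
    KKf n (fun s => F s + KKf n G s) t
      = KKf n F t
        + KKf n (fun s => F s - 2 * KKf n F s + KKf n (fun r => G r + KKf n F r) s) t := by
  have hPper : PerQ n dF (KKf n F) := KKf_per hF
  have hKGper : PerQ n dG (KKf n G) := KKf_per hG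
  have hFKGper : PerQ n (dF + dG) (fun s => F s + KKf n G s) := perq_add hF hKGper
  have hGPper : PerQ n (dG + dF) (fun s => G s + KKf n F s) := perq_add hG hPper
  have hDper : PerQ n (dG + dF) (KKf n (fun r => G r + KKf n F r)) := KKf_per hGPper
  have hUinner : PerQ n (dF - 2 * dF + (dG + dF))
      (fun s => F s - 2 * KKf n F s + KKf n (fun r => G r + KKf n F r) s) :=
    perq_comb hF hPper hDper
  have P_le : ∀ t' s, t' ≤ s → KKf n F t' ≤ F s := fun t' s h => KKf_le_far hF hdF npos s t' h
  have E_le : ∀ t' s u, t' ≤ s → s ≤ u → KKf n (fun s => F s + KKf n G s) t' ≤ F s + G u := by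
    intro t' s u h1 h2
    have h3 : KKf n (fun s => F s + KKf n G s) t' ≤ F s + KKf n G s :=
      KKf_le_far hFKGper (by linarith) npos s t' h1
    have h4 : KKf n G s ≤ G u := KKf_le_far hG hdG npos u s h2
    linarith
  have D_le : ∀ t' s u, t' ≤ s → s ≤ u → KKf n (fun r => G r + KKf n F r) t' ≤ G s + F u := by
    intro t' s u h1 h2
    have h3 : KKf n (fun r => G r + KKf n F r) t' ≤ G s + KKf n F s :=
      KKf_le_far hGPper (by linarith) npos s t' h1
    have h4 : KKf n F s ≤ F u := P_le s u h2
    linarith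
  have U_le : ∀ t' x, t' ≤ x →
      KKf n (fun s => F s - 2 * KKf n F s + KKf n (fun r => G r + KKf n F r) s) t'
        ≤ F x - 2 * KKf n F x + KKf n (fun r => G r + KKf n F r) x :=
    fun t' x h => KKf_le_far hUinner (by linarith) npos x t' h
  apply le_antisymm
  · -- E ≤ P + U
    obtain ⟨x, htx, hxn, hUx'⟩ := KKf_spec (n := n)
      (fun s => F s - 2 * KKf n F s + KKf n (fun r => G r + KKf n F r) s) t
    have hUx : KKf n (fun s => F s - 2 * KKf n F s + KKf n (fun r => G r + KKf n F r) s) t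
        = F x - 2 * KKf n F x + KKf n (fun r => G r + KKf n F r) x := hUx'
    obtain ⟨w, hxw, hwn, hDw'⟩ := KKf_spec (n := n) (fun r => G r + KKf n F r) x
    have hDw : KKf n (fun r => G r + KKf n F r) x = G w + KKf n F w := hDw'
    obtain ⟨v, hwv, hvn, hPv⟩ := KKf_spec (n := n) F w
    classical
    have hexσ : ∃ σ, t ≤ σ ∧ F σ = KKf n F t := by
      obtain ⟨σ, h1, h2, h3⟩ := KKf_spec (n := n) F t
      exact ⟨σ, h1, h3.symm⟩
    obtain ⟨σ, hmin, htσ, hFσ⟩ : ∃ σ, (∀ m, m < σ → ¬(t ≤ m ∧ F m = KKf n F t))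
        ∧ t ≤ σ ∧ F σ = KKf n F t := by
      obtain ⟨h1, h2⟩ := Nat.find_spec hexσ
      exact ⟨Nat.find hexσ, fun m hm => Nat.find_min hexσ hm, h1, h2⟩
    have hstrict : ∀ m, t ≤ m → m < σ → KKf n F t < F m := by
      intro m h1 h2
      have h3 := hmin m h2
      push_neg at h3
      have h4 := h3 h1
      have h5 := P_le t m h1
      omega
    have hFxPx : KKf n F x ≤ F x := P_le x x le_rfl
    have hPwPx : KKf n F x ≤ KKf n F w := by
      rw [hPv]
      exact P_le x v (by omega)
    by_cases hσw : σ ≤ w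
    · have h1 : KKf n (fun s => F s + KKf n G s) t ≤ F σ + G w := E_le t σ w htσ hσw
      rw [hFσ] at h1
      rw [hUx, hDw]
      linarith
    · push_neg at hσw
      have hxlt : x < σ := by omega
      have hPxt : KKf n F x = KKf n F t := by
        apply le_antisymm
        · calc KKf n F x ≤ F σ := P_le x σ (by omega)
          _ = KKf n F t := hFσ
        · obtain ⟨z, h1, h2, h3⟩ := KKf_spec (n := n) F x
          rw [h3]
          exact P_le t z (by omega)
      have h1 : KKf n (fun s => F s + KKf n G s) t ≤ F x + G w := E_le t x w htx hxw
      have h2 : KKf n F t ≤ KKf n F w := by rw [hPv]; exact P_le t v (by omega)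
      rw [hUx, hDw, hPxt]
      linarith
  · -- P + U ≤ E
    obtain ⟨s, hts, hsn, hEs'⟩ := KKf_spec (n := n) (fun s => F s + KKf n G s) t
    have hEs : KKf n (fun s => F s + KKf n G s) t = F s + KKf n G s := hEs'
    obtain ⟨u, hsu, hun, hKGu⟩ := KKf_spec (n := n) G s
    have hE : KKf n (fun s => F s + KKf n G s) t = F s + G u := by rw [hEs, hKGu]
    have Fmin : ∀ s', t ≤ s' → s' ≤ u → F s ≤ F s' := by
      intro s' h1 h2
      have h3 := E_le t s' u h1 h2
      rw [hE] at h3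
      linarith
    obtain ⟨y, huy, hyn, hPuy⟩ := KKf_spec (n := n) F u
    by_cases hcase : KKf n F u ≤ F s
    · -- case A
      have hPsu : KKf n F s = KKf n F u := by
        apply le_antisymm
        · rw [hPuy]; exact P_le s y (by omega)
        · obtain ⟨z, h1, h2, h3⟩ := KKf_spec (n := n) F s
          rw [h3]
          by_cases hz : z ≤ u
          · calc KKf n F u ≤ F s := hcase
            _ ≤ F z := Fmin z (by omega) hz
          · exact P_le u z (by omega)
      have h1 := U_le t s hts
      have h2 := D_le s u y hsu huy
      have h3 : KKf n F t ≤ KKf n F u := by rw [hPuy]; exact P_le t y (by omega)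
      rw [hE]
      linarith [h1, h2, h3, hPsu, hPuy]
    · -- case B
      push_neg at hcase
      have hPt : KKf n F t = F s := by
        apply le_antisymm
        · exact P_le t s hts
        · obtain ⟨z, h1, h2, h3⟩ := KKf_spec (n := n) F t
          rw [h3]
          by_cases hz : z ≤ u
          · exact Fmin z h1 hz
          · have h4 : KKf n F u ≤ F z := P_le u z (by omega)
            linarith
      classical
      obtain ⟨x, hsx, hxu, hFxle, hgreatest⟩ : ∃ x, s ≤ x ∧ x ≤ u ∧ F x ≤ KKf n F u ∧
          ∀ m, x < m → m ≤ u → ¬(s ≤ m ∧ F m ≤ KKf n F u) := by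
        have hpreds : s ≤ s ∧ F s ≤ KKf n F u := ⟨le_rfl, by linarith⟩
        have hspec := Nat.findGreatest_spec (P := fun x => s ≤ x ∧ F x ≤ KKf n F u) hsu hpreds
        refine ⟨Nat.findGreatest (fun x => s ≤ x ∧ F x ≤ KKf n F u) u,
          hspec.1, Nat.findGreatest_le u, hspec.2, ?_⟩
        intro m h1 h2
        exact Nat.findGreatest_is_greatest (P := fun x => s ≤ x ∧ F x ≤ KKf n F u) h1 h2
      have hFx : F x = KKf n F u := by
        apply le_antisymm hFxle
        rcases Nat.eq_or_lt_of_le hxu with h | h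
        · rw [h]; exact P_le u u le_rfl
        · have h1 := hgreatest (x+1) (by omega) (by omega)
          push_neg at h1
          have h2 := h1 (by omega)
          have h3 := hstep x
          omega
      have hPx : KKf n F x = KKf n F u := by
        apply le_antisymm
        · rw [hPuy]; exact P_le x y (by omega)
        · obtain ⟨z, h1, h2, h3⟩ := KKf_spec (n := n) F x
          rw [h3]
          by_cases hz : z ≤ u
          · rcases Nat.eq_or_lt_of_le h1 with h4 | h4
            · rw [← h4, hFx]
            · have h5 := hgreatest z h4 hz
              push_neg at h5
              have h6 := h5 (by omega)
              linarith
          · exact P_le u z (by omega)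
      have h1 := U_le t x (by omega)
      have h2 := D_le x u y hxu huy
      rw [hE, hPt]
      linarith [h1, h2, hPx, hFx, hPuy]

noncomputable def T1 (p : Finset (Fin n) × Finset (Fin n) × Finset (Fin n)) :
    Finset (Fin n) × Finset (Fin n) × Finset (Fin n) :=
  ((dualPair p.1 p.2.1).1, (dualPair p.1 p.2.1).2, p.2.2)

noncomputable def T2 (p : Finset (Fin n) × Finset (Fin n) × Finset (Fin n)) :
    Finset (Fin n) × Finset (Fin n) × Finset (Fin n) :=
  (p.1, (dualPair p.2.1 p.2.2).1, (dualPair p.2.1 p.2.2).2)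

lemma braid_dom {A B C : Finset (Fin n)} (hAB : B.card ≤ A.card) (hBC : C.card ≤ B.card) :
    T1 (T2 (T1 (A, B, C))) = T2 (T1 (T2 (A, B, C))) := by
  have hdAB : ((B.card : ℤ)) ≤ A.card := by exact_mod_cast hAB
  have hdBC : ((C.card : ℤ)) ≤ B.card := by exact_mod_cast hBC
  have hdAC : ((C.card : ℤ)) ≤ A.card := by linarith
  have hFper : PerQ n ((A.card : ℤ) - B.card) (hgt A B) := hgt_perq A B
  have hGper : PerQ n ((B.card : ℤ) - C.card) (hgt B C) := hgt_perq B C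
  -- LHS step 1
  have row1 : ∀ t, rwq (dualPair A B).1 t = rwq A t - (KKf n (hgt A B) (t+1) - KKf n (hgt A B) t) := fun t => (dual_rw hdAB t).1
  have row2 : ∀ t, rwq (dualPair A B).2 t = rwq B t + (KKf n (hgt A B) (t+1) - KKf n (hgt A B) t) := fun t => (dual_rw hdAB t).2
  have hG1 : ∀ t, hgt (dualPair A B).2 C t = hgt B C t + (KKf n (hgt A B) t - KKf n (hgt A B) 0) := by
    apply hgt_eq_of_incr (fun t => hgt B C t + (KKf n (hgt A B) t - KKf n (hgt A B) 0)) (by simp [hgt_zero])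
    intro s
    have h3 := hgt_succ B C s
    show rwq (dualPair A B).2 s - rwq C s = (hgt B C (s+1) + (KKf n (hgt A B) (s+1) - KKf n (hgt A B) 0)) - (hgt B C s + (KKf n (hgt A B) s - KKf n (hgt A B) 0))
    rw [row2 s, h3]; ring
  have hKG1 : ∀ t, KKf n (hgt (dualPair A B).2 C) t = KKf n (fun s => hgt B C s + KKf n (hgt A B) s) t - KKf n (hgt A B) 0 := by
    intro t
    rw [KKf_congr (F := hgt (dualPair A B).2 C)
        (G := fun s => (hgt B C s + KKf n (hgt A B) s) + (-(KKf n (hgt A B) 0))) (fun s => by rw [hG1 s]; ring) t,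
      KKf_add_const]
    ring
  -- LHS step 2
  have hd2 : ((C.card : ℤ)) ≤ ((dualPair A B).2).card := by rw [(dual_card A B).2]; exact hdAC
  have row3 : ∀ t, rwq (dualPair (dualPair A B).2 C).1 t = rwq B t + (KKf n (hgt A B) (t+1) - KKf n (hgt A B) t) - (KKf n (fun s => hgt B C s + KKf n (hgt A B) s) (t+1) - KKf n (fun s => hgt B C s + KKf n (hgt A B) s) t) := by
    intro t
    have h := (dual_rw hd2 t).1
    rw [hKG1 (t+1), hKG1 t, row2 t] at h
    rw [h]; ring
  have row4 : ∀ t, rwq (dualPair (dualPair A B).2 C).2 t = rwq C t + (KKf n (fun s => hgt B C s + KKf n (hgt A B) s) (t+1) - KKf n (fun s => hgt B C s + KKf n (hgt A B) s) t) := by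
    intro t
    have h := (dual_rw hd2 t).2
    rw [hKG1 (t+1), hKG1 t] at h
    rw [h]; ring
  have hF2 : ∀ t, hgt (dualPair A B).1 (dualPair (dualPair A B).2 C).1 t = hgt A B t - 2 * (KKf n (hgt A B) t - KKf n (hgt A B) 0) + (KKf n (fun s => hgt B C s + KKf n (hgt A B) s) t - KKf n (fun s => hgt B C s + KKf n (hgt A B) s) 0) := by
    apply hgt_eq_of_incr _ (by simp [hgt_zero])
    intro s
    have h3 := hgt_succ A B s
    show rwq (dualPair A B).1 s - rwq (dualPair (dualPair A B).2 C).1 s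
        = (hgt A B (s+1) - 2 * (KKf n (hgt A B) (s+1) - KKf n (hgt A B) 0) + (KKf n (fun s => hgt B C s + KKf n (hgt A B) s) (s+1) - KKf n (fun s => hgt B C s + KKf n (hgt A B) s) 0))
          - (hgt A B s - 2 * (KKf n (hgt A B) s - KKf n (hgt A B) 0) + (KKf n (fun s => hgt B C s + KKf n (hgt A B) s) s - KKf n (fun s => hgt B C s + KKf n (hgt A B) s) 0))
    rw [row1 s, row3 s, h3]; ring
  have hKF2 : ∀ t, KKf n (hgt (dualPair A B).1 (dualPair (dualPair A B).2 C).1) t = KKf n (fun s => hgt A B s - 2 * KKf n (hgt A B) s + KKf n (fun s => hgt B C s + KKf n (hgt A B) s) s) t + 2 * KKf n (hgt A B) 0 - KKf n (fun s => hgt B C s + KKf n (hgt A B) s) 0 := by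
    intro t
    rw [KKf_congr (F := hgt (dualPair A B).1 (dualPair (dualPair A B).2 C).1)
        (G := fun s => (hgt A B s - 2 * KKf n (hgt A B) s + KKf n (fun s => hgt B C s + KKf n (hgt A B) s) s) + (2 * KKf n (hgt A B) 0 - KKf n (fun s => hgt B C s + KKf n (hgt A B) s) 0))
        (fun s => by rw [hF2 s]; ring) t,
      KKf_add_const]
    ring
  -- LHS step 3
  have hd3 : ((((dualPair (dualPair A B).2 C).1).card : ℤ)) ≤ ((dualPair A B).1).card := by
    rw [(dual_card (dualPair A B).2 C).1, (dual_card A B).1]; exact hdBC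
  have row5 : ∀ t, rwq (dualPair (dualPair A B).1 (dualPair (dualPair A B).2 C).1).1 t
      = rwq A t - (KKf n (hgt A B) (t+1) - KKf n (hgt A B) t) - (KKf n (fun s => hgt A B s - 2 * KKf n (hgt A B) s + KKf n (fun s => hgt B C s + KKf n (hgt A B) s) s) (t+1) - KKf n (fun s => hgt A B s - 2 * KKf n (hgt A B) s + KKf n (fun s => hgt B C s + KKf n (hgt A B) s) s) t) := by
    intro t
    have h := (dual_rw hd3 t).1
    rw [hKF2 (t+1), hKF2 t, row1 t] at h
    rw [h]; ring
  have row6 : ∀ t, rwq (dualPair (dualPair A B).1 (dualPair (dualPair A B).2 C).1).2 t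
      = rwq B t + (KKf n (hgt A B) (t+1) - KKf n (hgt A B) t) - (KKf n (fun s => hgt B C s + KKf n (hgt A B) s) (t+1) - KKf n (fun s => hgt B C s + KKf n (hgt A B) s) t) + (KKf n (fun s => hgt A B s - 2 * KKf n (hgt A B) s + KKf n (fun s => hgt B C s + KKf n (hgt A B) s) s) (t+1) - KKf n (fun s => hgt A B s - 2 * KKf n (hgt A B) s + KKf n (fun s => hgt B C s + KKf n (hgt A B) s) s) t) := by
    intro t
    have h := (dual_rw hd3 t).2
    rw [hKF2 (t+1), hKF2 t, row3 t] at h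
    rw [h]; ring
  -- RHS step 1
  have rowr1 : ∀ t, rwq (dualPair B C).1 t = rwq B t - (KKf n (hgt B C) (t+1) - KKf n (hgt B C) t) := fun t => (dual_rw hdBC t).1
  have rowr2 : ∀ t, rwq (dualPair B C).2 t = rwq C t + (KKf n (hgt B C) (t+1) - KKf n (hgt B C) t) := fun t => (dual_rw hdBC t).2
  have hF1' : ∀ t, hgt A (dualPair B C).1 t = hgt A B t + (KKf n (hgt B C) t - KKf n (hgt B C) 0) := by
    apply hgt_eq_of_incr _ (by simp [hgt_zero])
    intro s
    have h3 := hgt_succ A B s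
    show rwq A s - rwq (dualPair B C).1 s = (hgt A B (s+1) + (KKf n (hgt B C) (s+1) - KKf n (hgt B C) 0)) - (hgt A B s + (KKf n (hgt B C) s - KKf n (hgt B C) 0))
    rw [rowr1 s, h3]; ring
  have hKF1' : ∀ t, KKf n (hgt A (dualPair B C).1) t = KKf n (fun s => hgt A B s + KKf n (hgt B C) s) t - KKf n (hgt B C) 0 := by
    intro t
    rw [KKf_congr (F := hgt A (dualPair B C).1)
        (G := fun s => (hgt A B s + KKf n (hgt B C) s) + (-(KKf n (hgt B C) 0))) (fun s => by rw [hF1' s]; ring) t,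
      KKf_add_const]
    ring
  -- RHS step 2
  have hd2' : ((((dualPair B C).1).card : ℤ)) ≤ A.card := by rw [(dual_card B C).1]; exact hdAC
  have rowr3 : ∀ t, rwq (dualPair A (dualPair B C).1).1 t = rwq A t - (KKf n (fun s => hgt A B s + KKf n (hgt B C) s) (t+1) - KKf n (fun s => hgt A B s + KKf n (hgt B C) s) t) := by
    intro t
    have h := (dual_rw hd2' t).1
    rw [hKF1' (t+1), hKF1' t] at h
    rw [h]; ring
  have rowr4 : ∀ t, rwq (dualPair A (dualPair B C).1).2 t = rwq B t - (KKf n (hgt B C) (t+1) - KKf n (hgt B C) t) + (KKf n (fun s => hgt A B s + KKf n (hgt B C) s) (t+1) - KKf n (fun s => hgt A B s + KKf n (hgt B C) s) t) := by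
    intro t
    have h := (dual_rw hd2' t).2
    rw [hKF1' (t+1), hKF1' t, rowr1 t] at h
    rw [h]; ring
  have hG2' : ∀ t, hgt (dualPair A (dualPair B C).1).2 (dualPair B C).2 t = hgt B C t - 2 * (KKf n (hgt B C) t - KKf n (hgt B C) 0) + (KKf n (fun s => hgt A B s + KKf n (hgt B C) s) t - KKf n (fun s => hgt A B s + KKf n (hgt B C) s) 0) := by
    apply hgt_eq_of_incr _ (by simp [hgt_zero])
    intro s
    have h3 := hgt_succ B C s
    show rwq (dualPair A (dualPair B C).1).2 s - rwq (dualPair B C).2 s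
        = (hgt B C (s+1) - 2 * (KKf n (hgt B C) (s+1) - KKf n (hgt B C) 0) + (KKf n (fun s => hgt A B s + KKf n (hgt B C) s) (s+1) - KKf n (fun s => hgt A B s + KKf n (hgt B C) s) 0))
          - (hgt B C s - 2 * (KKf n (hgt B C) s - KKf n (hgt B C) 0) + (KKf n (fun s => hgt A B s + KKf n (hgt B C) s) s - KKf n (fun s => hgt A B s + KKf n (hgt B C) s) 0))
    rw [rowr4 s, rowr2 s, h3]; ring
  have hKG2' : ∀ t, KKf n (hgt (dualPair A (dualPair B C).1).2 (dualPair B C).2) t = KKf n (fun s => hgt B C s - 2 * KKf n (hgt B C) s + KKf n (fun s => hgt A B s + KKf n (hgt B C) s) s) t + 2 * KKf n (hgt B C) 0 - KKf n (fun s => hgt A B s + KKf n (hgt B C) s) 0 := by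
    intro t
    rw [KKf_congr (F := hgt (dualPair A (dualPair B C).1).2 (dualPair B C).2)
        (G := fun s => (hgt B C s - 2 * KKf n (hgt B C) s + KKf n (fun s => hgt A B s + KKf n (hgt B C) s) s) + (2 * KKf n (hgt B C) 0 - KKf n (fun s => hgt A B s + KKf n (hgt B C) s) 0))
        (fun s => by rw [hG2' s]; ring) t,
      KKf_add_const]
    ring
  -- RHS step 3
  have hd3' : ((((dualPair B C).2).card : ℤ)) ≤ ((dualPair A (dualPair B C).1).2).card := by
    rw [(dual_card B C).2, (dual_card A (dualPair B C).1).2]; exact hdAB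
  have rowr5 : ∀ t, rwq (dualPair (dualPair A (dualPair B C).1).2 (dualPair B C).2).1 t
      = rwq B t - (KKf n (hgt B C) (t+1) - KKf n (hgt B C) t) + (KKf n (fun s => hgt A B s + KKf n (hgt B C) s) (t+1) - KKf n (fun s => hgt A B s + KKf n (hgt B C) s) t) - (KKf n (fun s => hgt B C s - 2 * KKf n (hgt B C) s + KKf n (fun s => hgt A B s + KKf n (hgt B C) s) s) (t+1) - KKf n (fun s => hgt B C s - 2 * KKf n (hgt B C) s + KKf n (fun s => hgt A B s + KKf n (hgt B C) s) s) t) := by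
    intro t
    have h := (dual_rw hd3' t).1
    rw [hKG2' (t+1), hKG2' t, rowr4 t] at h
    rw [h]; ring
  have rowr6 : ∀ t, rwq (dualPair (dualPair A (dualPair B C).1).2 (dualPair B C).2).2 t
      = rwq C t + (KKf n (hgt B C) (t+1) - KKf n (hgt B C) t) + (KKf n (fun s => hgt B C s - 2 * KKf n (hgt B C) s + KKf n (fun s => hgt A B s + KKf n (hgt B C) s) s) (t+1) - KKf n (fun s => hgt B C s - 2 * KKf n (hgt B C) s + KKf n (fun s => hgt A B s + KKf n (hgt B C) s) s) t) := by
    intro t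
    have h := (dual_rw hd3' t).2
    rw [hKG2' (t+1), hKG2' t, rowr2 t] at h
    rw [h]; ring
  -- the two key identities
  have idE : ∀ t, KKf n (fun s => hgt A B s + KKf n (hgt B C) s) t = KKf n (hgt A B) t + KKf n (fun s => hgt A B s - 2 * KKf n (hgt A B) s + KKf n (fun s => hgt B C s + KKf n (hgt A B) s) s) t := fun t =>
    propII hFper hGper (by linarith) (by linarith) (hgt_step_up A B) t
  have idD : ∀ t, KKf n (fun s => hgt B C s + KKf n (hgt A B) s) t = KKf n (hgt B C) t + KKf n (fun s => hgt B C s - 2 * KKf n (hgt B C) s + KKf n (fun s => hgt A B s + KKf n (hgt B C) s) s) t := fun t =>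
    propII hGper hFper (by linarith) (by linarith) (hgt_step_up B C) t
  -- conclude
  have eqA : (dualPair (dualPair A B).1 (dualPair (dualPair A B).2 C).1).1 = (dualPair A (dualPair B C).1).1 := by
    apply rwq_ext
    intro t
    rw [row5 t, rowr3 t, idE (t+1), idE t]
    ring
  have eqB : (dualPair (dualPair A B).1 (dualPair (dualPair A B).2 C).1).2 = (dualPair (dualPair A (dualPair B C).1).2 (dualPair B C).2).1 := by
    apply rwq_ext
    intro t
    rw [row6 t, rowr5 t, idE (t+1), idE t, idD (t+1), idD t]
    ring
  have eqC : (dualPair (dualPair A B).2 C).2 = (dualPair (dualPair A (dualPair B C).1).2 (dualPair B C).2).2 := by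
    apply rwq_ext
    intro t
    rw [row4 t, rowr6 t, idD (t+1), idD t]
    ring
  show ((dualPair (dualPair A B).1 (dualPair (dualPair A B).2 C).1).1, (dualPair (dualPair A B).1 (dualPair (dualPair A B).2 C).1).2, (dualPair (dualPair A B).2 C).2)
      = ((dualPair A (dualPair B C).1).1, (dualPair (dualPair A (dualPair B C).1).2 (dualPair B C).2).1, (dualPair (dualPair A (dualPair B C).1).2 (dualPair B C).2).2)
  rw [eqA, eqB, eqC]

lemma bal_preserve {X Y : Finset (Fin n)} (hd : (Y.card:ℤ) ≤ X.card) {j : Fin n}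
    (hB : BalancedSite X Y j) :
    BalancedSite (dualPair X Y).1 (dualPair X Y).2 j := by
  obtain ⟨i, t, htn, hBI, hmem⟩ := hB
  rw [← resi_val i, balInt_iff htn] at hBI
  obtain ⟨h1, h2⟩ := hBI
  have hFper := hgt_perq X Y
  have hd0 : (0:ℤ) ≤ (X.card:ℤ) - Y.card := by linarith
  have hFiv : ∀ c, c ≤ t + 1 → hgt X Y (i:ℕ) ≤ hgt X Y ((i:ℕ) + c) := by
    intro c hc
    rcases Nat.eq_zero_or_pos c with h | h
    · rw [h]; simp
    · have := h2 (c - 1) (by omega)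
      rwa [show (i:ℕ) + (c - 1 + 1) = (i:ℕ) + c by omega] at this
  have hKconst : ∀ c, c ≤ t + 1 → KKf n (hgt X Y) ((i:ℕ) + c) = KKf n (hgt X Y) (i:ℕ) := by
    intro c hc
    induction c with
    | zero => rfl
    | succ c ih =>
      have hic := ih (by omega)
      have hflip := KKf_succ_flip hFper hd0 npos (hgt_step_up X Y) ((i:ℕ) + c)
      have hnot : ¬ (hgt X Y ((i:ℕ)+c) < KKf n (hgt X Y) ((i:ℕ)+c+1)) := by
        intro hlt
        have hs := (flip_iff hFper hd0 npos _).mp hlt (t + 1 - c) (by omega) (by omega)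
        rw [show (i:ℕ) + c + (t + 1 - c) = (i:ℕ) + (t+1) by omega, h1] at hs
        have := hFiv c (by omega)
        linarith
      rw [if_neg hnot, add_zero] at hflip
      rw [show (i:ℕ) + (c+1) = (i:ℕ) + c + 1 by omega, hflip]
      exact hic
  refine ⟨i, t, htn, ?_, hmem⟩
  rw [← resi_val i, balInt_iff htn]
  constructor
  · rw [dual_hgt, dual_hgt, hKconst (t+1) le_rfl, h1]
  · intro l hl
    rw [dual_hgt, dual_hgt, hKconst (l+1) (by omega)]
    have := h2 l hl
    linarith

lemma bal_preserve' {X Y : Finset (Fin n)} (hd : (X.card:ℤ) ≤ Y.card) {j : Fin n}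
    (hB : BalancedSite X Y j) :
    BalancedSite (dualPair X Y).1 (dualPair X Y).2 j := by
  obtain ⟨i, t, htn, hBI, hmem⟩ := hB
  rw [← resi_val i, balInt_iff htn] at hBI
  obtain ⟨h1, h2⟩ := hBI
  have hFper := hgt_perq X Y
  have hd0 : (X.card:ℤ) - Y.card ≤ 0 := by linarith
  have hKconst : ∀ c, c ≤ t + 1 → KKf n (hgt X Y) ((i:ℕ) + c) = KKf n (hgt X Y) (i:ℕ) := by
    intro c hc
    induction c with
    | zero => rfl
    | succ c ih =>
      have hic := ih (by omega)
      have hflip := KKf_succ_flip' hFper hd0 npos (hgt_step_down X Y) ((i:ℕ) + c)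
      have hnot : ¬ (hgt X Y ((i:ℕ) + c + n + 1) < KKf n (hgt X Y) ((i:ℕ)+c)) := by
        intro hlt
        have hs := (flip_iff' hFper hd0 npos _).mp hlt (c + 1) (by omega) (by omega)
        rw [show (i:ℕ) + c + n + 1 - (c+1) = (i:ℕ) + n by omega] at hs
        have e1 : hgt X Y ((i:ℕ) + n) = hgt X Y (i:ℕ) + ((X.card:ℤ) - Y.card) := hFper (i:ℕ)
        have e2 : hgt X Y ((i:ℕ) + c + n + 1) = hgt X Y ((i:ℕ) + (c + 1)) + ((X.card:ℤ) - Y.card) := by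
          have := hFper ((i:ℕ) + c + 1)
          rw [show (i:ℕ) + c + 1 + n = (i:ℕ) + c + n + 1 by omega,
              show (i:ℕ) + c + 1 = (i:ℕ) + (c + 1) by omega] at this
          exact this
        have e3 := h2 c (by omega)
        rw [show (i:ℕ) + (c + 1) = (i:ℕ) + c + 1 by omega] at e2
        rw [show (i:ℕ) + (c + 1) = (i:ℕ) + c + 1 by omega] at e3
        linarith
      rw [if_neg hnot, add_zero] at hflip
      rw [show (i:ℕ) + (c+1) = (i:ℕ) + c + 1 by omega, hflip]
      exact hic
  refine ⟨i, t, htn, ?_, hmem⟩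
  rw [← resi_val i, balInt_iff htn]
  constructor
  · rw [dual_hgt, dual_hgt, hKconst (t+1) le_rfl, h1]
  · intro l hl
    rw [dual_hgt, dual_hgt, hKconst (l+1) (by omega)]
    have := h2 l hl
    linarith

lemma unbal_flip_iff {X Y : Finset (Fin n)} (hd : (Y.card:ℤ) ≤ X.card) (j : Fin n) :
    ¬ BalancedSite X Y j ↔ hgt X Y (j:ℕ) < KKf n (hgt X Y) ((j:ℕ)+1) := by
  have hFper := hgt_perq X Y
  have hd0 : (0:ℤ) ≤ (X.card:ℤ) - Y.card := by linarith
  rw [unbal_iff hd]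
  constructor
  · rintro ⟨-, hstrict⟩
    exact (flip_iff hFper hd0 npos _).mpr hstrict
  · intro hflip
    have hstrict := (flip_iff hFper hd0 npos _).mp hflip
    refine ⟨?_, hstrict⟩
    have h1 : KKf n (hgt X Y) ((j:ℕ)+1) ≤ hgt X Y ((j:ℕ)+1) := by
      have := KKf_le (n := n) (hgt X Y) ((j:ℕ)+1) (u := 0) (by omega); simpa using this
    have h2 := hgt_succ X Y (j:ℕ)
    have h3 := rwq_cases X (j:ℕ)
    have h4 := rwq_cases Y (j:ℕ)
    omega

lemma unbal_flip_iff' {X Y : Finset (Fin n)} (hd : (X.card:ℤ) ≤ Y.card) (j : Fin n) :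
    ¬ BalancedSite X Y j ↔ hgt X Y ((j:ℕ) + n + 1) < KKf n (hgt X Y) (j:ℕ) := by
  have hFper := hgt_perq X Y
  have hd0 : (X.card:ℤ) - Y.card ≤ 0 := by linarith
  rw [unbal_iff' hd]
  constructor
  · rintro ⟨-, hstrict⟩
    exact (flip_iff' hFper hd0 npos _).mpr hstrict
  · intro hflip
    have hstrict := (flip_iff' hFper hd0 npos _).mp hflip
    refine ⟨?_, hstrict⟩
    have h1 : KKf n (hgt X Y) (j:ℕ) ≤ hgt X Y ((j:ℕ) + n) := KKf_le' _ (by omega) (by omega)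
    have h2 := hgt_succ X Y ((j:ℕ) + n)
    rw [show (j:ℕ) + n + 1 = ((j:ℕ) + n) + 1 by omega] at hflip
    have h3 := rwq_cases X ((j:ℕ) + n)
    have h4 := rwq_cases Y ((j:ℕ) + n)
    have h5 : rwq X ((j:ℕ) + n) = rwq X (j:ℕ) := rwq_add_n X (j:ℕ)
    have h6 : rwq Y ((j:ℕ) + n) = rwq Y (j:ℕ) := rwq_add_n Y (j:ℕ)
    omega

lemma unbal_card {X Y : Finset (Fin n)} (hd : (Y.card:ℤ) ≤ X.card) :
    ((Finset.univ.filter (fun j => ¬ BalancedSite X Y j)).card : ℤ) = (X.card:ℤ) - Y.card := by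
  have hFper := hgt_perq X Y
  have hd0 : (0:ℤ) ≤ (X.card:ℤ) - Y.card := by linarith
  have h1 : ((Finset.univ.filter (fun j => ¬ BalancedSite X Y j)).card : ℤ)
      = ∑ j : Fin n, (if ¬ BalancedSite X Y j then (1:ℤ) else 0) := by
    rw [Finset.sum_boole]
  rw [h1]
  have h2 : ∀ j : Fin n, (if ¬ BalancedSite X Y j then (1:ℤ) else 0)
      = KKf n (hgt X Y) ((j:ℕ)+1) - KKf n (hgt X Y) (j:ℕ) := by
    intro j
    have hflip := KKf_succ_flip hFper hd0 npos (hgt_step_up X Y) (j:ℕ)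
    by_cases hb : ¬ BalancedSite X Y j
    · rw [if_pos hb]
      rw [(unbal_flip_iff hd j)] at hb
      rw [if_pos hb] at hflip
      omega
    · rw [if_neg hb]
      push_neg at hb
      have : ¬ (hgt X Y (j:ℕ) < KKf n (hgt X Y) ((j:ℕ)+1)) := by
        rw [← unbal_flip_iff hd j]; exact not_not_intro hb
      rw [if_neg this] at hflip
      omega
  rw [Finset.sum_congr rfl (fun j _ => h2 j)]
  rw [Fin.sum_univ_eq_sum_range (fun v => KKf n (hgt X Y) (v+1) - KKf n (hgt X Y) v)]
  rw [Finset.sum_range_sub (fun v => KKf n (hgt X Y) v)]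
  have := KKf_per hFper 0
  rw [Nat.zero_add] at this
  rw [this]; ring

lemma unbal_card' {X Y : Finset (Fin n)} (hd : (X.card:ℤ) ≤ Y.card) :
    ((Finset.univ.filter (fun j => ¬ BalancedSite X Y j)).card : ℤ) = (Y.card:ℤ) - X.card := by
  have hFper := hgt_perq X Y
  have hd0 : (X.card:ℤ) - Y.card ≤ 0 := by linarith
  have h1 : ((Finset.univ.filter (fun j => ¬ BalancedSite X Y j)).card : ℤ)
      = ∑ j : Fin n, (if ¬ BalancedSite X Y j then (1:ℤ) else 0) := by
    rw [Finset.sum_boole]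
  rw [h1]
  have h2 : ∀ j : Fin n, (if ¬ BalancedSite X Y j then (1:ℤ) else 0)
      = -(KKf n (hgt X Y) ((j:ℕ)+1) - KKf n (hgt X Y) (j:ℕ)) := by
    intro j
    have hflip := KKf_succ_flip' hFper hd0 npos (hgt_step_down X Y) (j:ℕ)
    by_cases hb : ¬ BalancedSite X Y j
    · rw [if_pos hb]
      rw [(unbal_flip_iff' hd j)] at hb
      rw [if_pos hb] at hflip
      omega
    · rw [if_neg hb]
      push_neg at hb
      have : ¬ (hgt X Y ((j:ℕ) + n + 1) < KKf n (hgt X Y) (j:ℕ)) := by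
        rw [← unbal_flip_iff' hd j]; exact not_not_intro hb
      rw [if_neg this] at hflip
      omega
  rw [Finset.sum_congr rfl (fun j _ => h2 j)]
  rw [Finset.sum_neg_distrib]
  rw [Fin.sum_univ_eq_sum_range (fun v => KKf n (hgt X Y) (v+1) - KKf n (hgt X Y) v)]
  rw [Finset.sum_range_sub (fun v => KKf n (hgt X Y) v)]
  have := KKf_per hFper 0
  rw [Nat.zero_add] at this
  rw [this]; ring

lemma bal_dual_iff (X Y : Finset (Fin n)) (j : Fin n) :
    BalancedSite (dualPair X Y).1 (dualPair X Y).2 j ↔ BalancedSite X Y j := by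
  have hc1 : (dualPair X Y).1.card = Y.card := (dual_card X Y).1
  have hc2 : (dualPair X Y).2.card = X.card := (dual_card X Y).2
  have key : Finset.univ.filter (fun j => ¬ BalancedSite (dualPair X Y).1 (dualPair X Y).2 j)
      = Finset.univ.filter (fun j => ¬ BalancedSite X Y j) := by
    rcases le_total ((Y.card:ℤ)) ((X.card:ℤ)) with hd | hd
    · apply Finset.eq_of_subset_of_card_le
      · intro z hz
        rw [Finset.mem_filter] at hz ⊢
        refine ⟨Finset.mem_univ z, ?_⟩
        intro hb
        exact hz.2 (bal_preserve hd hb)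
      · have e1 : ((Finset.univ.filter (fun j => ¬ BalancedSite X Y j)).card : ℤ)
            = (X.card:ℤ) - Y.card := unbal_card hd
        have e2 : ((Finset.univ.filter
            (fun j => ¬ BalancedSite (dualPair X Y).1 (dualPair X Y).2 j)).card : ℤ)
            = (X.card:ℤ) - Y.card := by
          rw [unbal_card' (by rw [hc1, hc2]; exact hd), hc1, hc2]
        have : ((Finset.univ.filter (fun j => ¬ BalancedSite X Y j)).card : ℤ)
            = ((Finset.univ.filter
              (fun j => ¬ BalancedSite (dualPair X Y).1 (dualPair X Y).2 j)).card : ℤ) := by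
          rw [e1, e2]
        exact_mod_cast le_of_eq this
    · apply Finset.eq_of_subset_of_card_le
      · intro z hz
        rw [Finset.mem_filter] at hz ⊢
        refine ⟨Finset.mem_univ z, ?_⟩
        intro hb
        exact hz.2 (bal_preserve' hd hb)
      · have e1 : ((Finset.univ.filter (fun j => ¬ BalancedSite X Y j)).card : ℤ)
            = (Y.card:ℤ) - X.card := unbal_card' hd
        have e2 : ((Finset.univ.filter
            (fun j => ¬ BalancedSite (dualPair X Y).1 (dualPair X Y).2 j)).card : ℤ)
            = (Y.card:ℤ) - X.card := by
          rw [unbal_card (by rw [hc1, hc2]; exact hd), hc1, hc2]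
        have : ((Finset.univ.filter (fun j => ¬ BalancedSite X Y j)).card : ℤ)
            = ((Finset.univ.filter
              (fun j => ¬ BalancedSite (dualPair X Y).1 (dualPair X Y).2 j)).card : ℤ) := by
          rw [e1, e2]
        exact_mod_cast le_of_eq this
  constructor
  · intro h
    by_contra hb
    have : j ∈ Finset.univ.filter (fun j => ¬ BalancedSite X Y j) :=
      Finset.mem_filter.mpr ⟨Finset.mem_univ j, hb⟩
    rw [← key, Finset.mem_filter] at this
    exact this.2 h
  · intro h
    by_contra hb
    have : j ∈ Finset.univ.filter
        (fun j => ¬ BalancedSite (dualPair X Y).1 (dualPair X Y).2 j) :=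
      Finset.mem_filter.mpr ⟨Finset.mem_univ j, hb⟩
    rw [key, Finset.mem_filter] at this
    exact this.2 h

lemma dual_invol (X Y : Finset (Fin n)) :
    dualPair (dualPair X Y).1 (dualPair X Y).2 = (X, Y) := by
  have h1 : (dualPair (dualPair X Y).1 (dualPair X Y).2).1 = X := by
    ext j
    rw [mem_dualPair1, bal_dual_iff]
    by_cases hb : BalancedSite X Y j
    · rw [if_pos hb, mem_dualPair1, if_pos hb]
    · rw [if_neg hb, mem_dualPair2, if_neg hb]
  have h2 : (dualPair (dualPair X Y).1 (dualPair X Y).2).2 = Y := by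
    ext j
    rw [mem_dualPair2, bal_dual_iff]
    by_cases hb : BalancedSite X Y j
    · rw [if_pos hb, mem_dualPair2, if_pos hb]
    · rw [if_neg hb, mem_dualPair1, if_neg hb]
  rw [Prod.ext_iff]
  exact ⟨h1, h2⟩

lemma T1_invol (p : Finset (Fin n) × Finset (Fin n) × Finset (Fin n)) : T1 (T1 p) = p := by
  obtain ⟨a, b, c⟩ := p
  show ((dualPair (dualPair a b).1 (dualPair a b).2).1,
        (dualPair (dualPair a b).1 (dualPair a b).2).2, c) = (a, b, c)
  rw [dual_invol a b]

lemma T2_invol (p : Finset (Fin n) × Finset (Fin n) × Finset (Fin n)) : T2 (T2 p) = p := by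
  obtain ⟨a, b, c⟩ := p
  show (a, (dualPair (dualPair b c).1 (dualPair b c).2).1,
        (dualPair (dualPair b c).1 (dualPair b c).2).2) = (a, b, c)
  rw [dual_invol b c]

lemma bp_T1 {p : Finset (Fin n) × Finset (Fin n) × Finset (Fin n)}
    (h : T1 (T2 (T1 (T1 p))) = T2 (T1 (T2 (T1 p)))) :
    T1 (T2 (T1 p)) = T2 (T1 (T2 p)) := by
  rw [T1_invol] at h
  have h2 := congrArg T2 h
  rw [T2_invol] at h2
  exact h2.symm

lemma bp_T2 {p : Finset (Fin n) × Finset (Fin n) × Finset (Fin n)}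
    (h : T1 (T2 (T1 (T2 p))) = T2 (T1 (T2 (T2 p)))) :
    T1 (T2 (T1 p)) = T2 (T1 (T2 p)) := by
  rw [T2_invol] at h
  have h2 := congrArg T1 h
  rw [T1_invol] at h2
  exact h2.symm

lemma T1_card1 (p : Finset (Fin n) × Finset (Fin n) × Finset (Fin n)) :
    (T1 p).1.card = p.2.1.card := (dual_card _ _).1
lemma T1_card2 (p : Finset (Fin n) × Finset (Fin n) × Finset (Fin n)) :
    (T1 p).2.1.card = p.1.card := (dual_card _ _).2
lemma T1_card3 (p : Finset (Fin n) × Finset (Fin n) × Finset (Fin n)) :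
    (T1 p).2.2.card = p.2.2.card := rfl
lemma T2_card1 (p : Finset (Fin n) × Finset (Fin n) × Finset (Fin n)) :
    (T2 p).1.card = p.1.card := rfl
lemma T2_card2 (p : Finset (Fin n) × Finset (Fin n) × Finset (Fin n)) :
    (T2 p).2.1.card = p.2.2.card := (dual_card _ _).1
lemma T2_card3 (p : Finset (Fin n) × Finset (Fin n) × Finset (Fin n)) :
    (T2 p).2.2.card = p.2.1.card := (dual_card _ _).2

lemma braid_dom' (p : Finset (Fin n) × Finset (Fin n) × Finset (Fin n))
    (hAB : p.2.1.card ≤ p.1.card) (hBC : p.2.2.card ≤ p.2.1.card) :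
    T1 (T2 (T1 p)) = T2 (T1 (T2 p)) := by
  obtain ⟨a, b, c⟩ := p
  exact braid_dom hAB hBC

lemma braid_all (p : Finset (Fin n) × Finset (Fin n) × Finset (Fin n)) :
    T1 (T2 (T1 p)) = T2 (T1 (T2 p)) := by
  obtain ⟨a, b, c⟩ := p
  rcases le_total (b.card) (a.card) with h1 | h1
  · rcases le_total (c.card) (b.card) with h2 | h2
    · exact braid_dom' (a, b, c) h1 h2
    · rcases le_total (c.card) (a.card) with h3 | h3
      · apply bp_T2
        apply braid_dom' (T2 (a, b, c)) <;>
          simp only [T1_card1, T1_card2, T1_card3, T2_card1, T2_card2, T2_card3] <;> omega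
      · apply bp_T2
        apply bp_T1
        apply braid_dom' (T1 (T2 (a, b, c))) <;>
          simp only [T1_card1, T1_card2, T1_card3, T2_card1, T2_card2, T2_card3] <;> omega
  · rcases le_total (c.card) (a.card) with h3 | h3
    · apply bp_T1
      apply braid_dom' (T1 (a, b, c)) <;>
        simp only [T1_card1, T1_card2, T1_card3, T2_card1, T2_card2, T2_card3] <;> omega
    · rcases le_total (c.card) (b.card) with h2 | h2
      · apply bp_T1
        apply bp_T2
        apply braid_dom' (T2 (T1 (a, b, c))) <;>
          simp only [T1_card1, T1_card2, T1_card3, T2_card1, T2_card2, T2_card3] <;> omega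
      · apply bp_T1
        apply bp_T2
        apply bp_T1
        apply braid_dom' (T1 (T2 (T1 (a, b, c)))) <;>
          simp only [T1_card1, T1_card2, T1_card3, T2_card1, T2_card2, T2_card3] <;> omega

lemma sOp_eval_lo {k : ℕ} (e : ℕ) (hk : e + 1 < k) (qs : Fin k → Finset (Fin n)) :
    sOp e qs ⟨e, by omega⟩ = (dualPair (qs ⟨e, by omega⟩) (qs ⟨e+1, hk⟩)).1 := by
  unfold sOp
  rw [dif_pos hk, if_pos rfl]

lemma sOp_eval_hi {k : ℕ} (e : ℕ) (hk : e + 1 < k) (qs : Fin k → Finset (Fin n)) :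
    sOp e qs ⟨e+1, hk⟩ = (dualPair (qs ⟨e, by omega⟩) (qs ⟨e+1, hk⟩)).2 := by
  unfold sOp
  rw [dif_pos hk, if_neg (show ¬((⟨e+1, hk⟩ : Fin k) : ℕ) = e by simp), if_pos rfl]

lemma sOp_eval_other {k : ℕ} (e : ℕ) (hk : e + 1 < k) (qs : Fin k → Finset (Fin n))
    (j : Fin k) (hj1 : (j:ℕ) ≠ e) (hj2 : (j:ℕ) ≠ e + 1) :
    sOp e qs j = qs j := by
  unfold sOp
  rw [dif_pos hk, if_neg hj1, if_neg hj2]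

-- INSERT

end BraidProof

/-- Braid relation for the dual-configuration operators `s_i` (here `i` is one-indexed,
`s_i` acting on the pair at one-indexed positions `(i, i+1)`, i.e. zero-indexed
positions `(i-1, i)`). -/
theorem braid_relation {n k : ℕ} [NeZero n] (qs : Fin k → Finset (Fin n)) (i : ℕ)
    (h1 : 1 ≤ i) (h2 : i ≤ k - 2) :
    sOp (i - 1) (sOp i (sOp (i - 1) qs)) = sOp i (sOp (i - 1) (sOp i qs)) := by
  have hk3 : 3 ≤ k := by omega
  set e := i - 1 with he
  have hie : i = e + 1 := by omega
  have hk1 : e + 1 < k := by omega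
  have hk2 : e + 1 + 1 < k := by omega
  rw [hie]
  set A := qs ⟨e, by omega⟩ with hA
  set B := qs ⟨e+1, hk1⟩ with hB
  set C := qs ⟨e+1+1, hk2⟩ with hC
  have q1lo : sOp e qs ⟨e, by omega⟩ = (dualPair A B).1 := sOp_eval_lo e hk1 qs
  have q1hi : sOp e qs ⟨e+1, hk1⟩ = (dualPair A B).2 := sOp_eval_hi e hk1 qs
  have q1ot : sOp e qs ⟨e+1+1, hk2⟩ = C :=
    sOp_eval_other e hk1 qs _ (by show e+1+1 ≠ e; omega) (by show e+1+1 ≠ e+1; omega)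
  have q2lo : sOp (e+1) (sOp e qs) ⟨e+1, hk1⟩ = (dualPair (dualPair A B).2 C).1 := by
    have h := sOp_eval_lo (e+1) hk2 (sOp e qs)
    rw [q1hi, q1ot] at h
    exact h
  have q2hi : sOp (e+1) (sOp e qs) ⟨e+1+1, hk2⟩ = (dualPair (dualPair A B).2 C).2 := by
    have h := sOp_eval_hi (e+1) hk2 (sOp e qs)
    rw [q1hi, q1ot] at h
    exact h
  have q2ot : sOp (e+1) (sOp e qs) ⟨e, by omega⟩ = (dualPair A B).1 := by
    rw [sOp_eval_other (e+1) hk2 (sOp e qs) _ (by show e ≠ e+1; omega) (by show e ≠ e+1+1; omega)]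
    exact q1lo
  have Llo : sOp e (sOp (e+1) (sOp e qs)) ⟨e, by omega⟩
      = (dualPair (dualPair A B).1 (dualPair (dualPair A B).2 C).1).1 := by
    have h := sOp_eval_lo e hk1 (sOp (e+1) (sOp e qs))
    rw [q2ot, q2lo] at h
    exact h
  have Lmid : sOp e (sOp (e+1) (sOp e qs)) ⟨e+1, hk1⟩
      = (dualPair (dualPair A B).1 (dualPair (dualPair A B).2 C).1).2 := by
    have h := sOp_eval_hi e hk1 (sOp (e+1) (sOp e qs))
    rw [q2ot, q2lo] at h
    exact h
  have Lhi : sOp e (sOp (e+1) (sOp e qs)) ⟨e+1+1, hk2⟩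
      = (dualPair (dualPair A B).2 C).2 := by
    rw [sOp_eval_other e hk1 (sOp (e+1) (sOp e qs)) _ (by show e+1+1 ≠ e; omega)
      (by show e+1+1 ≠ e+1; omega)]
    exact q2hi
  have r1lo : sOp (e+1) qs ⟨e+1, hk1⟩ = (dualPair B C).1 := sOp_eval_lo (e+1) hk2 qs
  have r1hi : sOp (e+1) qs ⟨e+1+1, hk2⟩ = (dualPair B C).2 := sOp_eval_hi (e+1) hk2 qs
  have r1ot : sOp (e+1) qs ⟨e, by omega⟩ = A :=
    sOp_eval_other (e+1) hk2 qs _ (by show e ≠ e+1; omega) (by show e ≠ e+1+1; omega)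
  have r2lo : sOp e (sOp (e+1) qs) ⟨e, by omega⟩ = (dualPair A (dualPair B C).1).1 := by
    have h := sOp_eval_lo e hk1 (sOp (e+1) qs)
    rw [r1ot, r1lo] at h
    exact h
  have r2hi : sOp e (sOp (e+1) qs) ⟨e+1, hk1⟩ = (dualPair A (dualPair B C).1).2 := by
    have h := sOp_eval_hi e hk1 (sOp (e+1) qs)
    rw [r1ot, r1lo] at h
    exact h
  have r2ot : sOp e (sOp (e+1) qs) ⟨e+1+1, hk2⟩ = (dualPair B C).2 := by
    rw [sOp_eval_other e hk1 (sOp (e+1) qs) _ (by show e+1+1 ≠ e; omega)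
      (by show e+1+1 ≠ e+1; omega)]
    exact r1hi
  have Rlo : sOp (e+1) (sOp e (sOp (e+1) qs)) ⟨e, by omega⟩
      = (dualPair A (dualPair B C).1).1 := by
    rw [sOp_eval_other (e+1) hk2 (sOp e (sOp (e+1) qs)) _ (by show e ≠ e+1; omega)
      (by show e ≠ e+1+1; omega)]
    exact r2lo
  have Rmid : sOp (e+1) (sOp e (sOp (e+1) qs)) ⟨e+1, hk1⟩
      = (dualPair (dualPair A (dualPair B C).1).2 (dualPair B C).2).1 := by
    have h := sOp_eval_lo (e+1) hk2 (sOp e (sOp (e+1) qs))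
    rw [r2hi, r2ot] at h
    exact h
  have Rhi : sOp (e+1) (sOp e (sOp (e+1) qs)) ⟨e+1+1, hk2⟩
      = (dualPair (dualPair A (dualPair B C).1).2 (dualPair B C).2).2 := by
    have h := sOp_eval_hi (e+1) hk2 (sOp e (sOp (e+1) qs))
    rw [r2hi, r2ot] at h
    exact h
  have hb := braid_all (A, B, C)
  have hb1 : (dualPair (dualPair A B).1 (dualPair (dualPair A B).2 C).1).1
      = (dualPair A (dualPair B C).1).1 := congrArg (fun z => z.1) hb
  have hb2 : (dualPair (dualPair A B).1 (dualPair (dualPair A B).2 C).1).2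
      = (dualPair (dualPair A (dualPair B C).1).2 (dualPair B C).2).1 :=
    congrArg (fun z => z.2.1) hb
  have hb3 : (dualPair (dualPair A B).2 C).2
      = (dualPair (dualPair A (dualPair B C).1).2 (dualPair B C).2).2 :=
    congrArg (fun z => z.2.2) hb
  funext j
  by_cases hj1 : (j:ℕ) = e
  · have hj : j = ⟨e, by omega⟩ := Fin.ext hj1
    rw [hj, Llo, Rlo]
    exact hb1
  · by_cases hj2 : (j:ℕ) = e + 1
    · have hj : j = ⟨e+1, hk1⟩ := Fin.ext hj2
      rw [hj, Lmid, Rmid]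
      exact hb2
    · by_cases hj3 : (j:ℕ) = e + 1 + 1
      · have hj : j = ⟨e+1+1, hk2⟩ := Fin.ext hj3
        rw [hj, Lhi, Rhi]
        exact hb3
      · rw [sOp_eval_other e hk1 (sOp (e+1) (sOp e qs)) j hj1 hj2,
            sOp_eval_other (e+1) hk2 (sOp e qs) j hj2 hj3,
            sOp_eval_other e hk1 qs j hj1 hj2,
            sOp_eval_other (e+1) hk2 (sOp e (sOp (e+1) qs)) j hj2 hj3,
            sOp_eval_other e hk1 (sOp (e+1) qs) j hj1 hj2,
            sOp_eval_other (e+1) hk2 qs j hj2 hj3]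


end MLQ
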